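/- arXiv:2402.02269 — 11 statements merged into one kernel-verified Lean document; each statement's English description precedes it below -/
import Mathlib

section
/- Let G be a finite group and let H be a TI-subgroup of G, i.e., for every g ∈ G the intersection H ∩ g⁻¹Hg equals H or the trivial subgroup. Let Ω be the set of right cosets of H in G with G acting by right multiplication. Then the action of G on Ω is NOT binary if and only if there exist conjugates H₁, H₂, H₃ of H which are pairwise distinct and such that H₁ ∩ (H₂·H₃) ≠ {1}, where H₂·H₃ = {xy : x ∈ H₂, y ∈ H₃}. -/
open scoped Pointwise MatrixGroups

/-- Right multiplication action of `g : G` on the set of right cosets of `H` in `G`. -/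
def rightCosetMul {G : Type*} [Group G] (H : Subgroup G) (g : G) :
    Quotient (QuotientGroup.rightRel H) → Quotient (QuotientGroup.rightRel H) :=
  Quotient.map (fun x => x * g) (fun x y h => by
    have h' := QuotientGroup.rightRel_apply.mp h
    exact QuotientGroup.rightRel_apply.mpr (by simpa [mul_assoc] using h'))

/-- The action of `G` on the right cosets of `H` is binary. -/
def IsBinaryCosetAction {G : Type*} [Group G] (H : Subgroup G) : Prop :=
  ∀ (n : ℕ) (I J : Fin n → Quotient (QuotientGroup.rightRel H)),
    (∀ i j : Fin n, ∃ g : G,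
        rightCosetMul H g (I i) = J i ∧ rightCosetMul H g (I j) = J j) →
    ∃ g : G, ∀ k, rightCosetMul H g (I k) = J k

/-- The adjacency relation of the graph `Γ(C)`. -/
def gammaAdj {G : Type*} [Group G] (C : Set G) (x y : G) : Prop :=
  x ∈ C ∧ y ∈ C ∧ x ≠ y ∧ Commute x y ∧ (x * y⁻¹ ∈ C ∨ y * x⁻¹ ∈ C)

section Auxiliary

variable {G : Type*} [Group G]

/-- Abbreviation for the conjugate subgroup `a H a⁻¹`. -/
abbrev cjSub (H : Subgroup G) (a : G) : Subgroup G :=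
  Subgroup.map (MulAut.conj a).toMonoidHom H

lemma mem_cjSub {H : Subgroup G} {a g : G} :
    g ∈ cjSub H a ↔ a⁻¹ * g * a ∈ H := by
  constructor
  · rintro ⟨h, hh, rfl⟩
    simpa [MulAut.conj_apply, mul_assoc] using hh
  · intro h
    exact ⟨a⁻¹ * g * a, h, by simp [MulAut.conj_apply]; group⟩

lemma card_cjSub (H : Subgroup G) (a : G) :
    Nat.card (cjSub H a) = Nat.card H :=
  (Nat.card_congr (H.equivMapOfInjective _ (MulAut.conj a).injective).toEquiv).symm

lemma cjSub_disjoint [Finite G] (H : Subgroup G)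
    (hTI : ∀ g : G, H ⊓ cjSub H g = H ∨ H ⊓ cjSub H g = ⊥)
    {a b : G} (hne : cjSub H a ≠ cjSub H b)
    {g : G} (hga : g ∈ cjSub H a) (hgb : g ∈ cjSub H b) : g = 1 := by
  rcases hTI (a⁻¹ * b) with h | h
  · exfalso
    apply hne
    have hle : H ≤ cjSub H (a⁻¹ * b) := inf_eq_left.mp h
    have heq2 : cjSub H (a⁻¹*b) = H :=
      (Subgroup.eq_of_le_of_card_ge hle (le_of_eq (card_cjSub H _))).symm
    ext k
    rw [mem_cjSub, mem_cjSub]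
    constructor
    · intro hk
      have h2 : a⁻¹ * k * a ∈ cjSub H (a⁻¹*b) := heq2.symm ▸ hk
      rw [mem_cjSub] at h2
      have e : (a⁻¹*b)⁻¹ * (a⁻¹ * k * a) * (a⁻¹*b) = b⁻¹ * k * b := by group
      rwa [e] at h2
    · intro hk
      have h2 : (a⁻¹*b)⁻¹ * (a⁻¹ * k * a) * (a⁻¹*b) ∈ H := by
        have e : (a⁻¹*b)⁻¹ * (a⁻¹ * k * a) * (a⁻¹*b) = b⁻¹ * k * b := by group
        rwa [e]
      have h3 := (mem_cjSub (H := H) (a := a⁻¹*b)).mpr h2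
      rwa [heq2] at h3
  · rw [mem_cjSub] at hga hgb
    have h2 : a⁻¹ * g * a ∈ H ⊓ cjSub H (a⁻¹*b) := by
      refine ⟨hga, mem_cjSub.mpr ?_⟩
      have e : (a⁻¹*b)⁻¹ * (a⁻¹ * g * a) * (a⁻¹*b) = b⁻¹ * g * b := by group
      rwa [e]
    rw [h, Subgroup.mem_bot] at h2
    have h3 := congrArg (fun t => a * t * a⁻¹) h2
    simpa [mul_assoc] using h3

lemma rcm_mk (H : Subgroup G) (g x : G) :
    rightCosetMul H g (Quotient.mk (QuotientGroup.rightRel H) x)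
      = Quotient.mk (QuotientGroup.rightRel H) (x * g) := rfl

lemma mk_eq_mk {H : Subgroup G} {x y : G} :
    (Quotient.mk (QuotientGroup.rightRel H) x = Quotient.mk (QuotientGroup.rightRel H) y)
      ↔ y * x⁻¹ ∈ H :=
  ⟨fun h => QuotientGroup.rightRel_apply.mp (Quotient.exact h),
   fun h => Quotient.sound (QuotientGroup.rightRel_apply.mpr h)⟩

lemma binary_of_tri [Finite G] (H : Subgroup G)
    (hTI : ∀ g : G, H ⊓ cjSub H g = H ∨ H ⊓ cjSub H g = ⊥)
    (hTri : ∀ a b c : G, cjSub H a ≠ cjSub H b → cjSub H a ≠ cjSub H c →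
      cjSub H b ≠ cjSub H c →
      ((cjSub H a : Set G) ∩ ((cjSub H b : Set G) * (cjSub H c : Set G))) = {1}) :
    IsBinaryCosetAction H := by
  intro n I J h2
  rcases n with _ | m
  · exact ⟨1, fun k => k.elim0⟩
  set x : Fin (m+1) → G := fun i => (I i).out with hxdef
  set y : Fin (m+1) → G := fun i => (J i).out with hydef
  have hP : ∀ (i : Fin (m+1)) (g : G),
      rightCosetMul H g (I i) = J i ↔ y i * (x i * g)⁻¹ ∈ H := by
    intro i g
    conv_lhs => rw [← (I i).out_eq, ← (J i).out_eq]
    rw [rcm_mk, mk_eq_mk]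
  have hstab : ∀ (i : Fin (m+1)) (g g' : G), y i * (x i * g)⁻¹ ∈ H →
      (y i * (x i * g')⁻¹ ∈ H ↔ g' * g⁻¹ ∈ cjSub H (x i)⁻¹) := by
    intro i g g' h1
    rw [mem_cjSub]
    constructor
    · intro hh
      have e : ((x i)⁻¹)⁻¹ * (g' * g⁻¹) * (x i)⁻¹
          = (y i * (x i * g')⁻¹)⁻¹ * (y i * (x i * g)⁻¹) := by group
      rw [e]; exact H.mul_mem (H.inv_mem hh) h1
    · intro hh
      have e : y i * (x i * g')⁻¹
          = (y i * (x i * g)⁻¹) * (((x i)⁻¹)⁻¹ * (g' * g⁻¹) * (x i)⁻¹)⁻¹ := by group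
      rw [e]; exact H.mul_mem h1 (H.inv_mem hh)
  obtain ⟨g₀, hg₀, -⟩ := h2 0 0
  rw [hP] at hg₀
  have hs : ∀ i, ∃ s : G, s ∈ cjSub H (x 0)⁻¹ ∧ y i * (x i * (s * g₀))⁻¹ ∈ H := by
    intro i
    obtain ⟨g, hg0, hgi⟩ := h2 0 i
    rw [hP] at hg0 hgi
    refine ⟨g * g₀⁻¹, (hstab 0 g₀ g hg₀).mp hg0, ?_⟩
    have e : g * g₀⁻¹ * g₀ = g := by group
    rwa [e]
  choose s hsK hsP using hs
  have huniq : ∀ i j : Fin (m+1),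
      cjSub H (x i)⁻¹ ≠ cjSub H (x 0)⁻¹ → cjSub H (x j)⁻¹ ≠ cjSub H (x 0)⁻¹ →
      ∀ t t' : G, t ∈ cjSub H (x 0)⁻¹ → t' ∈ cjSub H (x 0)⁻¹ →
        y i * (x i * (t * g₀))⁻¹ ∈ H → y j * (x j * (t' * g₀))⁻¹ ∈ H → t' = t := by
    intro i j hi hj t t' htK ht'K hti htj
    obtain ⟨g, hgi, hgj⟩ := h2 i j
    rw [hP] at hgi hgj
    have hti' : (t * g₀) * g⁻¹ ∈ cjSub H (x i)⁻¹ := (hstab i g (t*g₀) hgi).mp hti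
    have htj' : (t' * g₀) * g⁻¹ ∈ cjSub H (x j)⁻¹ := (hstab j g (t'*g₀) hgj).mp htj
    have hmem0 : t' * t⁻¹ ∈ cjSub H (x 0)⁻¹ := mul_mem ht'K (inv_mem htK)
    have e : t' * t⁻¹ = ((t' * g₀) * g⁻¹) * (((t * g₀) * g⁻¹))⁻¹ := by group
    by_cases hij : cjSub H (x i)⁻¹ = cjSub H (x j)⁻¹
    · have hmemj : t' * t⁻¹ ∈ cjSub H (x j)⁻¹ := by
        rw [e]; exact mul_mem htj' (inv_mem (hij ▸ hti'))
      have h1 := cjSub_disjoint H hTI hj hmemj hmem0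
      exact mul_inv_eq_one.mp h1
    · have hset := hTri (x 0)⁻¹ (x j)⁻¹ (x i)⁻¹ hj.symm hi.symm (fun h => hij h.symm)
      have hmem : t' * t⁻¹ ∈ ((cjSub H (x 0)⁻¹ : Set G) ∩
          ((cjSub H (x j)⁻¹ : Set G) * (cjSub H (x i)⁻¹ : Set G))) := by
        refine ⟨hmem0, ?_⟩
        rw [e]
        exact Set.mul_mem_mul htj' (inv_mem hti')
      rw [hset, Set.mem_singleton_iff] at hmem
      exact mul_inv_eq_one.mp hmem
  by_cases hall : ∀ i, cjSub H (x i)⁻¹ = cjSub H (x 0)⁻¹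
  · refine ⟨g₀, fun k => ?_⟩
    rw [hP]
    apply (hstab k (s k * g₀) g₀ (hsP k)).mpr
    have e : g₀ * (s k * g₀)⁻¹ = (s k)⁻¹ := by group
    rw [e]
    exact (hall k) ▸ inv_mem (hsK k)
  · push_neg at hall
    obtain ⟨i₀, hi₀⟩ := hall
    refine ⟨s i₀ * g₀, fun k => ?_⟩
    rw [hP]
    by_cases hk : cjSub H (x k)⁻¹ = cjSub H (x 0)⁻¹
    · apply (hstab k (s k * g₀) (s i₀ * g₀) (hsP k)).mpr
      have e : (s i₀ * g₀) * (s k * g₀)⁻¹ = s i₀ * (s k)⁻¹ := by group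
      rw [e]
      exact hk ▸ mul_mem (hsK i₀) (inv_mem (hsK k))
    · have heq := huniq k i₀ hk hi₀ (s k) (s i₀) (hsK k) (hsK i₀) (hsP k) (hsP i₀)
      rw [heq]
      exact hsP k

lemma nonbinary_of_witness [Finite G] (H : Subgroup G)
    (hTI : ∀ g : G, H ⊓ cjSub H g = H ∨ H ⊓ cjSub H g = ⊥)
    {a b c : G} (hab : cjSub H a ≠ cjSub H b) (hac : cjSub H a ≠ cjSub H c)
    (hbc : cjSub H b ≠ cjSub H c)
    (hne : ((cjSub H a : Set G) ∩ ((cjSub H b : Set G) * (cjSub H c : Set G))) ≠ {1}) :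
    ¬ IsBinaryCosetAction H := by
  -- extract a nontrivial element of the intersection
  have hsub : ({1} : Set G) ⊆ ((cjSub H a : Set G) ∩ ((cjSub H b : Set G) * (cjSub H c : Set G))) := by
    rintro t ht
    rw [Set.mem_singleton_iff] at ht
    subst ht
    exact ⟨one_mem _, ⟨1, one_mem _, 1, one_mem _, mul_one 1⟩⟩
  obtain ⟨z, hz, hz1⟩ : ∃ z, z ∈ ((cjSub H a : Set G) ∩
      ((cjSub H b : Set G) * (cjSub H c : Set G))) ∧ z ≠ 1 := by
    by_contra hcon
    push_neg at hcon
    exact hne (Set.Subset.antisymm (fun t ht => Set.mem_singleton_iff.mpr (hcon t ht)) hsub)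
  obtain ⟨hza, u, hu, v, hv, huv⟩ := hz
  rw [SetLike.mem_coe] at hza hu hv
  have huv' : u * v = z := huv
  clear huv
  -- the six basic point computations
  intro hbin
  set mkq : G → Quotient (QuotientGroup.rightRel H) :=
    fun t => Quotient.mk (QuotientGroup.rightRel H) t with hmkq
  have hA1 : rightCosetMul H 1 (mkq a⁻¹) = mkq a⁻¹ := by
    rw [hmkq, rcm_mk, mk_eq_mk]; simpa using one_mem H
  have hC1 : rightCosetMul H 1 (mkq c⁻¹) = mkq c⁻¹ := by
    rw [hmkq, rcm_mk, mk_eq_mk]; simpa using one_mem H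
  have hAz : rightCosetMul H z (mkq a⁻¹) = mkq a⁻¹ := by
    rw [hmkq, rcm_mk, mk_eq_mk]
    rw [mem_cjSub] at hza
    have e : a⁻¹ * (a⁻¹ * z)⁻¹ = (a⁻¹ * z * a)⁻¹ := by group
    rw [e]; exact inv_mem hza
  have hBz : rightCosetMul H z (mkq b⁻¹) = mkq (b⁻¹ * v) := by
    rw [hmkq, rcm_mk, mk_eq_mk]
    rw [mem_cjSub] at hu
    have e : b⁻¹ * v * (b⁻¹ * z)⁻¹ = (b⁻¹ * u * b)⁻¹ := by rw [← huv']; group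
    rw [e]; exact inv_mem hu
  have hBv : rightCosetMul H v (mkq b⁻¹) = mkq (b⁻¹ * v) := by
    rw [hmkq, rcm_mk]
  have hCv : rightCosetMul H v (mkq c⁻¹) = mkq c⁻¹ := by
    rw [hmkq, rcm_mk, mk_eq_mk]
    rw [mem_cjSub] at hv
    have e : c⁻¹ * (c⁻¹ * v)⁻¹ = (c⁻¹ * v * c)⁻¹ := by group
    rw [e]; exact inv_mem hv
  obtain ⟨g, hg⟩ := hbin 3 ![mkq a⁻¹, mkq b⁻¹, mkq c⁻¹] ![mkq a⁻¹, mkq (b⁻¹*v), mkq c⁻¹]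
    (by
      intro i j
      fin_cases i <;> fin_cases j <;> simp only [Matrix.cons_val_zero, Matrix.cons_val_one,
        Matrix.head_cons, Matrix.cons_val_two, Matrix.tail_cons]
      · exact ⟨1, hA1, hA1⟩
      · exact ⟨z, hAz, hBz⟩
      · exact ⟨1, hA1, hC1⟩
      · exact ⟨z, hBz, hAz⟩
      · exact ⟨v, hBv, hBv⟩
      · exact ⟨v, hBv, hCv⟩
      · exact ⟨1, hC1, hA1⟩
      · exact ⟨v, hCv, hBv⟩
      · exact ⟨1, hC1, hC1⟩)
  have e0 := hg 0
  have e1 := hg 1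
  have e2 := hg 2
  simp only [Matrix.cons_val_zero, Matrix.cons_val_one, Matrix.head_cons, Matrix.cons_val_two,
    Matrix.tail_cons] at e0 e1 e2
  rw [hmkq, rcm_mk, mk_eq_mk] at e0 e1 e2
  -- e0 : a⁻¹ * (a⁻¹ * g)⁻¹ ∈ H, so g ∈ cjSub H a
  have hga : g ∈ cjSub H a := by
    rw [mem_cjSub]
    have e : a⁻¹ * g * a = (a⁻¹ * (a⁻¹ * g)⁻¹)⁻¹ := by group
    rw [e]; exact inv_mem e0
  have hgc : g ∈ cjSub H c := by
    rw [mem_cjSub]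
    have e : c⁻¹ * g * c = (c⁻¹ * (c⁻¹ * g)⁻¹)⁻¹ := by group
    rw [e]; exact inv_mem e2
  have hg1 : g = 1 := cjSub_disjoint H hTI hac hga hgc
  subst hg1
  -- e1 : b⁻¹ * v * (b⁻¹ * 1)⁻¹ ∈ H, so v ∈ cjSub H b
  have hvb : v ∈ cjSub H b := by
    rw [mem_cjSub]
    have e : b⁻¹ * v * b = b⁻¹ * v * (b⁻¹ * 1)⁻¹ := by group
    rw [e]; exact e1
  have hv1 : v = 1 := cjSub_disjoint H hTI hbc hvb hv
  subst hv1
  rw [mul_one] at huv'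
  rw [← huv'] at hza hz1
  exact hz1 (cjSub_disjoint H hTI hab hza hu)

end Auxiliary

theorem stmt1 {G : Type*} [Group G] [Finite G] (H : Subgroup G)
    (hTI : ∀ g : G, H ⊓ Subgroup.map (MulAut.conj g).toMonoidHom H = H ∨
      H ⊓ Subgroup.map (MulAut.conj g).toMonoidHom H = ⊥) :
    ¬ IsBinaryCosetAction H ↔
      ∃ H₁ H₂ H₃ : Subgroup G,
        (∃ a : G, H₁ = Subgroup.map (MulAut.conj a).toMonoidHom H) ∧
        (∃ b : G, H₂ = Subgroup.map (MulAut.conj b).toMonoidHom H) ∧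
        (∃ c : G, H₃ = Subgroup.map (MulAut.conj c).toMonoidHom H) ∧
        H₁ ≠ H₂ ∧ H₁ ≠ H₃ ∧ H₂ ≠ H₃ ∧
        ((H₁ : Set G) ∩ ((H₂ : Set G) * (H₃ : Set G)) ≠ {1}) := by
  constructor
  · intro hnb
    by_contra hcon
    apply hnb
    apply binary_of_tri H hTI
    intro a b c hab hac hbc
    by_contra hne
    exact hcon ⟨cjSub H a, cjSub H b, cjSub H c, ⟨a, rfl⟩, ⟨b, rfl⟩, ⟨c, rfl⟩,
      hab, hac, hbc, hne⟩
  · rintro ⟨H₁, H₂, H₃, ⟨a, rfl⟩, ⟨b, rfl⟩, ⟨c, rfl⟩, hab, hac, hbc, hne⟩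
    exact nonbinary_of_witness H hTI hab hac hbc hne
end

section
/- Let G be a finite group, let C be a conjugacy class of G consisting of involutions, and suppose the graph Γ(C) has no edges, i.e., there do not exist distinct commuting x, y ∈ C with xy ∈ C. Let h ∈ C and H = ⟨h⟩ (a subgroup of order 2). Then the action of G on the set of right cosets of H by right multiplication is binary. -/
open scoped Pointwise MatrixGroups

/-- Helly-type lemma for pairwise intersecting 2-element sets with no triangle. -/
lemma helly2 {α : Type*} [Nonempty α] (n : ℕ) (A B : Fin n → α) (R : α → α → Prop)
    (hAB : ∀ k, A k ≠ B k)
    (hR : ∀ (k : Fin n) (g g' : α), (g = A k ∨ g = B k) → (g' = A k ∨ g' = B k) →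
      g ≠ g' → R g g')
    (htri : ∀ g1 g2 g3 : α, R g1 g2 → R g2 g3 → R g1 g3 → False)
    (hpair : ∀ i j : Fin n, ∃ g, (g = A i ∨ g = B i) ∧ (g = A j ∨ g = B j)) :
    ∃ g, ∀ k, g = A k ∨ g = B k := by
  by_contra hc
  push_neg at hc
  rcases Nat.eq_zero_or_pos n with rfl | hn
  · obtain ⟨g0⟩ := ‹Nonempty α›
    obtain ⟨k, _⟩ := hc g0
    exact k.elim0
  set i0 : Fin n := ⟨0, hn⟩
  obtain ⟨k1, hk1⟩ := hc (A i0)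
  obtain ⟨k2, hk2⟩ := hc (B i0)
  obtain ⟨g1, hg1i, hg1k⟩ := hpair i0 k1
  have hg1 : g1 = B i0 := by
    rcases hg1i with e | e
    · exfalso
      rcases hg1k with e' | e'
      · exact hk1.1 (e.symm.trans e')
      · exact hk1.2 (e.symm.trans e')
    · exact e
  have hBk1 : B i0 = A k1 ∨ B i0 = B k1 := hg1 ▸ hg1k
  obtain ⟨g2, hg2i, hg2k⟩ := hpair i0 k2
  have hg2 : g2 = A i0 := by
    rcases hg2i with e | e
    · exact e
    · exfalso
      rcases hg2k with e' | e'
      · exact hk2.1 (e.symm.trans e')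
      · exact hk2.2 (e.symm.trans e')
  have hAk2 : A i0 = A k2 ∨ A i0 = B k2 := hg2 ▸ hg2k
  obtain ⟨g, hgk1, hgk2⟩ := hpair k1 k2
  have hgA : g ≠ A i0 := by
    rintro rfl
    rcases hgk1 with e | e
    · exact hk1.1 e
    · exact hk1.2 e
  have hgB : g ≠ B i0 := by
    rintro rfl
    rcases hgk2 with e | e
    · exact hk2.1 e
    · exact hk2.2 e
  exact htri (A i0) (B i0) g
    (hR i0 _ _ (Or.inl rfl) (Or.inr rfl) (hAB i0))
    (hR k1 _ _ hBk1 hgk1 (Ne.symm hgB))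
    (hR k2 _ _ hAk2 hgk2 (Ne.symm hgA))

theorem stmt2 {G : Type*} [Group G] [Finite G] (C : Set G)
    (hclass : ∃ t : G, C = {x : G | IsConj t x})
    (hinv : ∀ x ∈ C, orderOf x = 2)
    (hedgeless : ¬ ∃ x y : G, gammaAdj C x y)
    (h : G) (hh : h ∈ C) :
    IsBinaryCosetAction (Subgroup.zpowers h) := by
  classical
  intro n I J hIJ
  obtain ⟨t, hC⟩ := hclass
  -- basic facts about C
  have hCconj : ∀ (p : G), ∀ c ∈ C, p * c * p⁻¹ ∈ C := by
    intro p c hc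
    rw [hC] at hc ⊢
    exact hc.trans (isConj_iff.mpr ⟨p, rfl⟩)
  have hCsq : ∀ c ∈ C, c * c = 1 := by
    intro c hc
    have := pow_orderOf_eq_one c
    rwa [hinv c hc, pow_two] at this
  have h1C : (1 : G) ∉ C := by
    intro hmem
    have := hinv 1 hmem
    simp at this
  have hsq : h * h = 1 := hCsq h hh
  have hne1 : h ≠ 1 := by rintro rfl; exact h1C hh
  have hinv_eq : h⁻¹ = h := inv_eq_of_mul_eq_one_right hsq
  -- membership in zpowers h
  have zmem : ∀ v : G, v ∈ Subgroup.zpowers h ↔ v = 1 ∨ v = h := by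
    intro v
    constructor
    · intro hv
      obtain ⟨k, hk⟩ := Subgroup.mem_zpowers_iff.mp hv
      have h2 : h ^ (2 : ℤ) = 1 := by
        have : h ^ (2 : ℕ) = (1 : G) := by rw [pow_two]; exact hsq
        rw [show (2 : ℤ) = ((2 : ℕ) : ℤ) from rfl, zpow_natCast, this]
      rcases Int.even_or_odd k with ⟨m, hm⟩ | ⟨m, hm⟩
      · left
        rw [← hk, hm, show m + m = 2 * m by ring, zpow_mul, h2, one_zpow]
      · right
        rw [← hk, hm, zpow_add, zpow_mul, h2, one_zpow, one_mul, zpow_one]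
    · rintro (rfl | rfl)
      · exact one_mem _
      · exact Subgroup.mem_zpowers _
  -- representatives
  set x : Fin n → G := fun k => (I k).out with hxdef
  set y : Fin n → G := fun k => (J k).out with hydef
  -- the condition in terms of representatives
  have hcond : ∀ (g : G) (k : Fin n),
      rightCosetMul (Subgroup.zpowers h) g (I k) = J k ↔
        (g = (x k)⁻¹ * y k ∨ g = (x k)⁻¹ * h * y k) := by
    intro g k
    have hx : Quotient.mk (QuotientGroup.rightRel (Subgroup.zpowers h)) (x k) = I k :=
      (I k).out_eq
    have hy : Quotient.mk (QuotientGroup.rightRel (Subgroup.zpowers h)) (y k) = J k :=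
      (J k).out_eq
    rw [← hx, ← hy]
    unfold rightCosetMul
    rw [Quotient.map_mk]
    have key : Quotient.mk (QuotientGroup.rightRel (Subgroup.zpowers h)) (x k * g) =
        Quotient.mk (QuotientGroup.rightRel (Subgroup.zpowers h)) (y k) ↔
        y k * (x k * g)⁻¹ ∈ Subgroup.zpowers h := by
      constructor
      · intro e
        exact QuotientGroup.rightRel_apply.mp (Quotient.exact e)
      · intro m
        exact Quotient.sound (QuotientGroup.rightRel_apply.mpr m)
    rw [key, zmem]
    constructor
    · rintro (e | e)
      · left
        rw [mul_inv_eq_one] at e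
        rw [e]; group
      · right
        rw [mul_inv_eq_iff_eq_mul] at e
        rw [e, show (x k)⁻¹ * h * (h * (x k * g)) = (x k)⁻¹ * (h * h) * (x k * g) by group,
          hsq]
        group
    · rintro (rfl | rfl)
      · left; group
      · right
        have e : y k * (x k * ((x k)⁻¹ * h * y k))⁻¹ = h⁻¹ := by group
        rw [e, hinv_eq]
  -- reinterpret hypothesis
  have hpair : ∀ i j : Fin n, ∃ g : G,
      (g = (x i)⁻¹ * y i ∨ g = (x i)⁻¹ * h * y i) ∧
      (g = (x j)⁻¹ * y j ∨ g = (x j)⁻¹ * h * y j) := by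
    intro i j
    obtain ⟨g, hgi, hgj⟩ := hIJ i j
    exact ⟨g, (hcond g i).mp hgi, (hcond g j).mp hgj⟩
  -- the two candidate elements are distinct
  have hAB : ∀ k : Fin n, (x k)⁻¹ * y k ≠ (x k)⁻¹ * h * y k := by
    intro k e
    apply hne1
    have := mul_right_cancel (b := y k)
      (a := (x k)⁻¹) (c := (x k)⁻¹ * h) ?_
    · have e2 := congrArg (fun z => x k * z) this
      simpa [mul_assoc] using e2.symm
    · rw [mul_assoc] at e ⊢
      exact e
  -- quotients of distinct elements of a 2-set lie in C
  have hR : ∀ (k : Fin n) (g g' : G),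
      (g = (x k)⁻¹ * y k ∨ g = (x k)⁻¹ * h * y k) →
      (g' = (x k)⁻¹ * y k ∨ g' = (x k)⁻¹ * h * y k) →
      g ≠ g' → g' * g⁻¹ ∈ C := by
    intro k g g' hg hg' hne
    have hBA : ((x k)⁻¹ * h * y k) * ((x k)⁻¹ * y k)⁻¹ ∈ C := by
      have e : ((x k)⁻¹ * h * y k) * ((x k)⁻¹ * y k)⁻¹ = (x k)⁻¹ * h * ((x k)⁻¹)⁻¹ := by
        group
      rw [e]
      exact hCconj (x k)⁻¹ h hh
    have hABmem : ((x k)⁻¹ * y k) * ((x k)⁻¹ * h * y k)⁻¹ ∈ C := by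
      have e : ((x k)⁻¹ * y k) * ((x k)⁻¹ * h * y k)⁻¹ = (x k)⁻¹ * h⁻¹ * ((x k)⁻¹)⁻¹ := by
        group
      rw [e, hinv_eq]
      exact hCconj (x k)⁻¹ h hh
    rcases hg with rfl | rfl <;> rcases hg' with rfl | rfl
    · exact absurd rfl hne
    · exact hBA
    · exact hABmem
    · exact absurd rfl hne
  -- triangle contradiction
  have htri : ∀ g1 g2 g3 : G, g2 * g1⁻¹ ∈ C → g3 * g2⁻¹ ∈ C → g3 * g1⁻¹ ∈ C → False := by
    intro g1 g2 g3 hp hq hr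
    set p := g2 * g1⁻¹ with hpdef
    set q := g3 * g2⁻¹ with hqdef
    have hqp : q * p = g3 * g1⁻¹ := by rw [hpdef, hqdef]; group
    have hqpC : q * p ∈ C := by rw [hqp]; exact hr
    have hp2 : p * p = 1 := hCsq p hp
    have hq2 : q * q = 1 := hCsq q hq
    have hqp2 : (q * p) * (q * p) = 1 := hCsq _ hqpC
    have hpinv : p⁻¹ = p := inv_eq_of_mul_eq_one_right hp2
    have hqinv : q⁻¹ = q := inv_eq_of_mul_eq_one_right hq2
    have hcomm : Commute q p := by
      have h' : (q * p)⁻¹ = q * p := inv_eq_of_mul_eq_one_right hqp2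
      have e : p * q = (q * p)⁻¹ := by rw [mul_inv_rev, hpinv, hqinv]
      exact (e.trans h').symm
    have hpq : q ≠ p := by
      intro e
      rw [e, hp2] at hqpC
      exact h1C hqpC
    apply hedgeless
    refine ⟨q, p, hq, hp, hpq, hcomm, Or.inl ?_⟩
    rw [hpinv]
    exact hqpC
  -- apply the Helly-type lemma
  obtain ⟨g, hg⟩ := helly2 n (fun k => (x k)⁻¹ * y k) (fun k => (x k)⁻¹ * h * y k)
    (fun a b => b * a⁻¹ ∈ C) hAB hR htri hpair
  exact ⟨g, fun k => (hcond g k).mpr (hg k)⟩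
end

section
/- Let G be a finite group containing a single conjugacy class C of involutions (so C is exactly the set of elements of order 2 in G, and they are all conjugate). Let X be the vertex set of a connected component of the graph Γ(C), and let N = {g ∈ G : g⁻¹Xg = X} be the normalizer in G of X. Then either X = C, or N ∩ ⟨C⟩ is a strongly embedded subgroup of ⟨C⟩. -/
open scoped Pointwise MatrixGroups

/-- A subgroup `M` of a finite group `L` is strongly embedded if it is proper, of even
order, and `M ∩ g⁻¹Mg` has odd order for every `g ∈ L \ M`. -/
def StronglyEmbedded {L : Type*} [Group L] (M : Subgroup L) : Prop :=
  M ≠ ⊤ ∧ Even (Nat.card M) ∧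
    ∀ g : L, g ∉ M → Odd (Nat.card {x : L // x ∈ M ∧ g * x * g⁻¹ ∈ M})

section Aux

variable {G : Type*} [Group G]

private lemma gammaAdj_symm {C : Set G} : Symmetric (gammaAdj C) :=
  fun _ _ h => ⟨h.2.1, h.1, h.2.2.1.symm, h.2.2.2.1.symm, h.2.2.2.2.symm⟩

private lemma orderOf_conj' (g x : G) : orderOf (g * x * g⁻¹) = orderOf x := by
  have := orderOf_injective (MulAut.conj g).toMonoidHom (MulAut.conj g).injective x
  simpa [MulAut.conj_apply] using this

private lemma conj_mem_inv {C : Set G} (hC : C = {x : G | orderOf x = 2}) (g : G) {x : G}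
    (hx : x ∈ C) : g⁻¹ * x * g ∈ C := by
  rw [hC] at hx ⊢
  have := orderOf_conj' g⁻¹ x
  rw [inv_inv] at this
  simpa [this] using hx

private lemma invol_mul_self {x : G} (h : orderOf x = 2) : x * x = 1 := by
  have := pow_orderOf_eq_one x
  rwa [h, pow_two] at this

private lemma invol_inv {x : G} (h : orderOf x = 2) : x⁻¹ = x :=
  inv_eq_of_mul_eq_one_right (invol_mul_self h)

private lemma edge_aux {C : Set G} (hC : C = {x : G | orderOf x = 2}) {a b : G}
    (ha : orderOf a = 2) (hb : orderOf b = 2) (hne : a ≠ b) (hcomm : Commute a b) :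
    gammaAdj C a b := by
  have hab1 : a * b ≠ 1 := by
    intro h
    have h2 : a⁻¹ = b := inv_eq_of_mul_eq_one_right h
    rw [invol_inv ha] at h2
    exact hne h2
  have hab2 : (a * b) ^ 2 = 1 := by
    rw [pow_two]
    calc a * b * (a * b) = a * (b * a) * b := by group
      _ = a * (a * b) * b := by rw [hcomm.eq]
      _ = (a * a) * (b * b) := by group
      _ = 1 := by rw [invol_mul_self ha, invol_mul_self hb, one_mul]
  have hab : orderOf (a * b) = 2 := orderOf_eq_prime hab2 hab1
  refine ⟨by rw [hC]; exact ha, by rw [hC]; exact hb, hne, hcomm, Or.inl ?_⟩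
  rw [invol_inv hb, hC]
  exact hab

private lemma gammaAdj_conj {C : Set G} (hC : C = {x : G | orderOf x = 2}) (g : G) {x y : G}
    (h : gammaAdj C x y) : gammaAdj C (g⁻¹ * x * g) (g⁻¹ * y * g) := by
  obtain ⟨hx, hy, hne, hcomm, hor⟩ := h
  refine ⟨conj_mem_inv hC g hx, conj_mem_inv hC g hy, ?_, ?_, ?_⟩
  · intro he
    exact hne (mul_left_cancel (mul_right_cancel he))
  · show g⁻¹ * x * g * (g⁻¹ * y * g) = g⁻¹ * y * g * (g⁻¹ * x * g)
    calc g⁻¹ * x * g * (g⁻¹ * y * g) = g⁻¹ * (x * y) * g := by group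
      _ = g⁻¹ * (y * x) * g := by rw [hcomm.eq]
      _ = g⁻¹ * y * g * (g⁻¹ * x * g) := by group
  · rcases hor with h1 | h1
    · left
      have e : g⁻¹ * x * g * (g⁻¹ * y * g)⁻¹ = g⁻¹ * (x * y⁻¹) * g := by group
      rw [e]
      exact conj_mem_inv hC g h1
    · right
      have e : g⁻¹ * y * g * (g⁻¹ * x * g)⁻¹ = g⁻¹ * (y * x⁻¹) * g := by group
      rw [e]
      exact conj_mem_inv hC g h1

private lemma rtg_conj {C : Set G} (hC : C = {x : G | orderOf x = 2}) (g : G) {a b : G}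
    (h : Relation.ReflTransGen (gammaAdj C) a b) :
    Relation.ReflTransGen (gammaAdj C) (g⁻¹ * a * g) (g⁻¹ * b * g) :=
  Relation.ReflTransGen.lift (fun x => g⁻¹ * x * g) (fun _ _ hr => gammaAdj_conj hC g hr) _ _ h

private lemma conj_pow_eq {a r : G} (h : a⁻¹ * r * a = r⁻¹) (k : ℕ) :
    a⁻¹ * r ^ k * a = (r ^ k)⁻¹ := by
  have e : (a⁻¹ * r * a) ^ k = a⁻¹ * r ^ k * a := by
    have := conj_pow (i := k) (a := a⁻¹) (b := r)
    simpa [inv_inv] using this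
  rw [← e, h, inv_pow]

end Aux

theorem stmt4 {G : Type*} [Group G] [Finite G] (C : Set G)
    (hC : C = {x : G | orderOf x = 2})
    (hconj : ∀ x ∈ C, ∀ y ∈ C, IsConj x y)
    (c : G) (hc : c ∈ C)
    (X : Set G) (hX : X = {x : G | Relation.ReflTransGen (gammaAdj C) c x})
    (N : Subgroup G) (hN : (N : Set G) = {g : G | (fun x => g⁻¹ * x * g) '' X = X}) :
    X = C ∨
      StronglyEmbedded ((N ⊓ Subgroup.closure C).subgroupOf (Subgroup.closure C)) := by
  classical
  have hc2 : orderOf c = 2 := by rw [hC] at hc; exact hc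
  have hXmem : ∀ x : G, x ∈ X ↔ Relation.ReflTransGen (gammaAdj C) c x := by
    intro x; rw [hX]; rfl
  have hsymm : Symmetric (Relation.ReflTransGen (gammaAdj C)) :=
    by haveI : Std.Symm (gammaAdj C) := ⟨fun a b hab => gammaAdj_symm hab⟩; exact fun x y h => Std.Symm.symm x y h
  -- membership in N is equivalent to `g⁻¹ c g ∈ X`
  have hNmem : ∀ g : G, g ∈ N ↔ g⁻¹ * c * g ∈ X := by
    intro g
    constructor
    · intro hg
      have hg' : (fun x => g⁻¹ * x * g) '' X = X := by
        have h1 : g ∈ (N : Set G) := hg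
        rw [hN] at h1; exact h1
      rw [← hg']
      exact ⟨c, (hXmem c).2 Relation.ReflTransGen.refl, rfl⟩
    · intro hgc
      have hrtg : Relation.ReflTransGen (gammaAdj C) c (g⁻¹ * c * g) := (hXmem _).1 hgc
      show g ∈ (N : Set G)
      rw [hN]
      show (fun x => g⁻¹ * x * g) '' X = X
      ext x
      simp only [Set.mem_image]
      constructor
      · rintro ⟨a, ha, rfl⟩
        have h2 := rtg_conj hC g ((hXmem a).1 ha)
        exact (hXmem _).2 (hrtg.trans h2)
      · intro hx
        refine ⟨g * x * g⁻¹, ?_, by group⟩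
        have h3 := rtg_conj hC g⁻¹ hrtg
        have e1 : (g⁻¹)⁻¹ * c * g⁻¹ = g * c * g⁻¹ := by rw [inv_inv]
        have e2 : (g⁻¹)⁻¹ * (g⁻¹ * c * g) * g⁻¹ = c := by group
        rw [e1, e2] at h3
        have h4 : Relation.ReflTransGen (gammaAdj C) c (g * c * g⁻¹) := hsymm h3
        have h5 := rtg_conj hC g⁻¹ ((hXmem x).1 hx)
        have e3 : (g⁻¹)⁻¹ * x * g⁻¹ = g * x * g⁻¹ := by rw [inv_inv]
        rw [e1, e3] at h5
        exact (hXmem _).2 (h4.trans h5)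
  have hcN : c ∈ N := by
    rw [hNmem]
    have : c⁻¹ * c * c = c := by group
    rw [this]
    exact (hXmem c).2 Relation.ReflTransGen.refl
  -- Key lemma: every involution normalizing X lies in X
  have lemA : ∀ t : G, orderOf t = 2 → t ∈ N → t ∈ X := by
    intro t ht htN
    by_cases hcomm : Commute c t
    · by_cases hct : t = c
      · exact (hXmem t).2 (hct ▸ Relation.ReflTransGen.refl)
      · exact (hXmem t).2 (Relation.ReflTransGen.single
          (edge_aux hC hc2 ht (Ne.symm hct) hcomm))
    have hct : t ≠ c := fun h => hcomm (h ▸ Commute.refl c)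
    set r := c * t with hr
    have hr1 : r ≠ 1 := by
      intro h
      exact hct (by rw [← invol_inv hc2, eq_comm, inv_eq_of_mul_eq_one_right h])
    have hcrc : c⁻¹ * r * c = r⁻¹ := by
      rw [hr, invol_inv hc2, mul_inv_rev, invol_inv hc2, invol_inv ht]
      calc c * (c * t) * c = (c * c) * (t * c) := by group
        _ = t * c := by rw [invol_mul_self hc2, one_mul]
    have htrt : t⁻¹ * r * t = r⁻¹ := by
      rw [hr, invol_inv ht, mul_inv_rev, invol_inv hc2, invol_inv ht]
      calc t * (c * t) * t = (t * c) * (t * t) := by group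
        _ = t * c := by rw [invol_mul_self ht, mul_one]
    set n := orderOf r with hn
    have hnpos : 0 < n := by
      have : IsOfFinOrder r := isOfFinOrder_of_finite r
      exact this.orderOf_pos
    rcases Nat.even_or_odd n with ⟨m, hm⟩ | ⟨k, hk⟩
    · -- n even: the middle element z commutes with both c and t
      have hmpos : 0 < m := by omega
      set z := r ^ m with hz
      have hzz : z * z = 1 := by
        rw [hz, ← pow_add, ← hm, hn]
        exact pow_orderOf_eq_one r
      have hzne : z ≠ 1 := by
        intro h1
        have := orderOf_dvd_of_pow_eq_one h1
        rw [← hn] at this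
        have := Nat.le_of_dvd hmpos this
        omega
      have hz2 : orderOf z = 2 := orderOf_eq_prime (by rw [pow_two]; exact hzz) hzne
      have hzinv : z⁻¹ = z := inv_eq_of_mul_eq_one_right hzz
      have hcz : Commute c z := by
        have h1 : c⁻¹ * z * c = z := by
          rw [hz, conj_pow_eq hcrc m, ← hz, hzinv]
        have h2 : z * c = c * z := by
          calc z * c = c * (c⁻¹ * z * c) := by group
            _ = c * z := by rw [h1]
        exact h2.symm
      have htz : Commute t z := by
        have h1 : t⁻¹ * z * t = z := by
          rw [hz, conj_pow_eq htrt m, ← hz, hzinv]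
        have h2 : z * t = t * z := by
          calc z * t = t * (t⁻¹ * z * t) := by group
            _ = t * z := by rw [h1]
        exact h2.symm
      have hzc : z ≠ c := fun h => hcomm ((h ▸ htz).symm)
      have hzt : z ≠ t := fun h => hcomm (h ▸ hcz)
      exact (hXmem t).2 (Relation.ReflTransGen.head
        (edge_aux hC hc2 hz2 (Ne.symm hzc) hcz)
        (Relation.ReflTransGen.single (edge_aux hC hz2 ht hzt htz.symm)))
    · -- n odd: c and t are conjugate by w = r^(k+1), which lies in N
      set w := r ^ (k + 1) with hw
      have hww : w * w = r := by
        rw [hw, ← pow_add]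
        have e : (k + 1) + (k + 1) = n + 1 := by omega
        rw [e, pow_succ, hn, pow_orderOf_eq_one, one_mul]
      have hcw : c⁻¹ * w * c = w⁻¹ := by
        rw [hw]
        exact conj_pow_eq hcrc (k + 1)
      have key : w⁻¹ * c * w = t := by
        rw [← hcw]
        calc c⁻¹ * w * c * c * w = c⁻¹ * w * (c * c) * w := by group
          _ = c⁻¹ * (w * w) := by rw [invol_mul_self hc2]; group
          _ = c⁻¹ * r := by rw [hww]
          _ = t := by rw [invol_inv hc2, hr, ← mul_assoc, invol_mul_self hc2, one_mul]
      have hwN : w ∈ N := by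
        rw [hw]
        exact N.pow_mem (N.mul_mem hcN htN) (k + 1)
      have := (hNmem w).1 hwN
      rwa [key] at this
  -- X is contained in C
  have hXsubC : X ⊆ C := by
    intro x hx
    have := (hXmem x).1 hx
    induction this with
    | refl => exact hc
    | tail _ hadj _ => exact hadj.2.1
  by_cases hXC : X = C
  · exact Or.inl hXC
  right
  set L := Subgroup.closure C with hL
  set M := (N ⊓ L).subgroupOf L with hM
  have hMmem : ∀ x : L, x ∈ M ↔ (x : G) ∈ N := by
    intro x
    rw [hM, Subgroup.mem_subgroupOf, Subgroup.mem_inf]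
    exact ⟨fun h => h.1, fun h => ⟨h, x.2⟩⟩
  refine ⟨?_, ?_, ?_⟩
  · -- M is proper
    intro htop
    obtain ⟨y, hyC, hyX⟩ : ∃ y, y ∈ C ∧ y ∉ X := by
      by_contra h
      push_neg at h
      exact hXC (Set.Subset.antisymm hXsubC (fun y hy => h y hy))
    have hyL : y ∈ L := Subgroup.subset_closure hyC
    have : (⟨y, hyL⟩ : L) ∈ M := htop ▸ Subgroup.mem_top _
    have hyN : y ∈ N := (hMmem _).1 this
    have hy2 : orderOf y = 2 := by rw [hC] at hyC; exact hyC
    exact hyX (lemA y hy2 hyN)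
  · -- M has even order
    have hcL : c ∈ L := Subgroup.subset_closure hc
    have hcM : (⟨c, hcL⟩ : L) ∈ M := (hMmem _).2 hcN
    set m0 : M := ⟨⟨c, hcL⟩, hcM⟩ with hm0
    have ho1 : orderOf m0 = orderOf c := by
      have e1 := orderOf_injective M.subtype Subtype.coe_injective m0
      have e2 := orderOf_injective L.subtype Subtype.coe_injective (⟨c, hcL⟩ : L)
      exact e1.symm.trans e2.symm
    have hdvd : 2 ∣ Nat.card M := by
      rw [← hc2, ← ho1]
      exact orderOf_dvd_natCard m0
    obtain ⟨q, hq⟩ := hdvd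
    exact ⟨q, by omega⟩
  · -- intersections are odd
    intro g hg
    by_contra hodd
    set K : Subgroup L :=
      { carrier := {x : L | x ∈ M ∧ g * x * g⁻¹ ∈ M}
        one_mem' := ⟨M.one_mem, by simpa using M.one_mem⟩
        mul_mem' := by
          rintro a b ⟨ha1, ha2⟩ ⟨hb1, hb2⟩
          refine ⟨M.mul_mem ha1 hb1, ?_⟩
          have e : g * (a * b) * g⁻¹ = (g * a * g⁻¹) * (g * b * g⁻¹) := by group
          rw [e]
          exact M.mul_mem ha2 hb2
        inv_mem' := by
          rintro a ⟨ha1, ha2⟩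
          refine ⟨M.inv_mem ha1, ?_⟩
          have e : g * a⁻¹ * g⁻¹ = (g * a * g⁻¹)⁻¹ := by group
          rw [e]
          exact M.inv_mem ha2 } with hK
    have hcard : Nat.card {x : L // x ∈ M ∧ g * x * g⁻¹ ∈ M} = Nat.card K :=
      Nat.card_congr (Equiv.subtypeEquivRight fun x => Iff.rfl)
    rw [hcard] at hodd
    have heven : Even (Nat.card K) := (Nat.even_or_odd _).resolve_right hodd
    have hdvd : 2 ∣ Nat.card K := heven.two_dvd
    obtain ⟨t, ht⟩ := exists_prime_orderOf_dvd_card' (G := K) 2 hdvd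
    have htK : (t : L) ∈ K := t.2
    obtain ⟨ht1, ht2⟩ := htK
    set τ : G := ((t : L) : G) with hτ
    have hτ2 : orderOf τ = 2 := by
      have e1 := orderOf_injective K.subtype Subtype.coe_injective t
      have e2 := orderOf_injective L.subtype Subtype.coe_injective (t : L)
      rw [← ht]
      exact e2.trans e1
    have hτN : τ ∈ N := (hMmem _).1 ht1
    have hτX := lemA τ hτ2 hτN
    set σ : G := (g : G) * τ * (g : G)⁻¹ with hσ
    have hσN : σ ∈ N := by
      have := (hMmem _).1 ht2
      simpa [hσ, hτ] using this
    have hσ2 : orderOf σ = 2 := by rw [hσ, orderOf_conj' _ _]; exact hτ2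
    have hσX := lemA σ hσ2 hσN
    have h1 : Relation.ReflTransGen (gammaAdj C) c τ := (hXmem τ).1 hτX
    have h2 : Relation.ReflTransGen (gammaAdj C) c σ := (hXmem σ).1 hσX
    have h3 := rtg_conj hC (g : G) h2
    have e : (g : G)⁻¹ * σ * (g : G) = τ := by rw [hσ]; group
    rw [e] at h3
    have h4 : Relation.ReflTransGen (gammaAdj C) c ((g : G)⁻¹ * c * (g : G)) :=
      h1.trans (hsymm h3)
    have hgN : (g : G) ∈ N := (hNmem _).2 ((hXmem _).2 h4)
    exact hg ((hMmem g).2 hgN)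
end

section
/- Let F be a finite field of characteristic 2 with |F| ≥ 4, let G = SL₂(F), and let H be a Sylow 2-subgroup of G. Then the action of G on the set of right cosets of H by right multiplication is binary. -/
open scoped Pointwise MatrixGroups

section Aux

variable {F : Type*} [Field F]

/-- action of `SL(2,F)` on column vectors -/
def vact (g : SL(2,F)) (v : Fin 2 → F) : Fin 2 → F := (↑g : Matrix (Fin 2) (Fin 2) F).mulVec v

lemma vact_mul (g h : SL(2,F)) (v : Fin 2 → F) : vact (g * h) v = vact g (vact h v) := by
  simp only [vact, Matrix.SpecialLinearGroup.coe_mul, Matrix.mulVec_mulVec]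

lemma vact_one (v : Fin 2 → F) : vact 1 v = v := by simp [vact]

lemma vact_inv_vact (g : SL(2,F)) (v : Fin 2 → F) : vact g⁻¹ (vact g v) = v := by
  rw [← vact_mul, inv_mul_cancel, vact_one]

lemma vact_vact_inv (g : SL(2,F)) (v : Fin 2 → F) : vact g (vact g⁻¹ v) = v := by
  rw [← vact_mul, mul_inv_cancel, vact_one]

lemma vact_eq_iff (g : SL(2,F)) (u w : Fin 2 → F) : vact g u = w ↔ u = vact g⁻¹ w := by
  constructor
  · rintro rfl; rw [vact_inv_vact]
  · rintro rfl; rw [vact_vact_inv]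

lemma vact_ne_zero (g : SL(2,F)) {v : Fin 2 → F} (hv : v ≠ 0) : vact g v ≠ 0 := by
  intro h
  apply hv
  have h2 := vact_inv_vact g v
  rw [h] at h2
  rw [← h2]
  simp [vact]

lemma vact_smul (g : SL(2,F)) (t : F) (v : Fin 2 → F) : vact g (t • v) = t • vact g v := by
  simp [vact, Matrix.mulVec_smul]

/-- the determinant pairing on pairs of vectors -/
def detfn (u v : Fin 2 → F) : F := u 0 * v 1 - u 1 * v 0

lemma detfn_vact (g : SL(2,F)) (u v : Fin 2 → F) : detfn (vact g u) (vact g v) = detfn u v := by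
  have hd : (↑g : Matrix (Fin 2) (Fin 2) F).det = 1 := g.prop
  rw [Matrix.det_fin_two] at hd
  simp only [detfn, vact, Matrix.mulVec, dotProduct, Fin.sum_univ_two]
  linear_combination (u 0 * v 1 - u 1 * v 0) * hd

lemma cancel {a b c c' : Fin 2 → F} (hab : detfn a b ≠ 0)
    (h1 : detfn a c = detfn a c') (h2 : detfn b c = detfn b c') : c = c' := by
  simp only [detfn] at hab h1 h2
  funext i
  fin_cases i
  · have : (a 0 * b 1 - a 1 * b 0) * (c 0 - c' 0) = 0 := by linear_combination b 0 * h1 - a 0 * h2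
    rcases mul_eq_zero.mp this with h | h
    · exact absurd h hab
    · simpa [sub_eq_zero] using h
  · have : (a 0 * b 1 - a 1 * b 0) * (c 1 - c' 1) = 0 := by linear_combination b 1 * h1 - a 1 * h2
    rcases mul_eq_zero.mp this with h | h
    · exact absurd h hab
    · simpa [sub_eq_zero] using h

lemma exists_scalar {u w : Fin 2 → F} (hu : u ≠ 0) (h : detfn u w = 0) : ∃ t : F, w = t • u := by
  simp only [detfn] at h
  by_cases h0 : u 0 ≠ 0
  · refine ⟨w 0 / u 0, funext fun i => ?_⟩
    fin_cases i
    · simp [div_mul_cancel₀, h0]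
    · show w 1 = w 0 / u 0 * u 1
      field_simp
      linear_combination h
  · push_neg at h0
    have h1 : u 1 ≠ 0 := by
      intro h1; apply hu; funext i; fin_cases i <;> simp [h0, h1]
    refine ⟨w 1 / u 1, funext fun i => ?_⟩
    fin_cases i
    · show w 0 = w 1 / u 1 * u 0
      field_simp
      linear_combination -h
    · simp [div_mul_cancel₀, h1]

lemma core {n : ℕ} (v w : Fin n → Fin 2 → F) (hv : ∀ k, v k ≠ 0)
    (h2 : ∀ i j : Fin n, ∃ g : SL(2,F), vact g (v i) = w i ∧ vact g (v j) = w j) :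
    ∃ g : SL(2,F), ∀ k, vact g (v k) = w k := by
  by_cases hind : ∃ i j : Fin n, detfn (v i) (v j) ≠ 0
  · obtain ⟨i0, j0, hij⟩ := hind
    obtain ⟨g0, hg0i, hg0j⟩ := h2 i0 j0
    refine ⟨g0, fun k => ?_⟩
    obtain ⟨g1, hg1i, hg1k⟩ := h2 i0 k
    obtain ⟨g2, hg2j, hg2k⟩ := h2 j0 k
    refine cancel (a := w i0) (b := w j0) ?_ ?_ ?_
    · rw [← hg0i, ← hg0j, detfn_vact]; exact hij
    · have e1 : detfn (w i0) (vact g0 (v k)) = detfn (v i0) (v k) := by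
        rw [← hg0i, detfn_vact]
      have e2 : detfn (w i0) (w k) = detfn (v i0) (v k) := by
        rw [← hg1i, ← hg1k, detfn_vact]
      exact e1.trans e2.symm
    · have e1 : detfn (w j0) (vact g0 (v k)) = detfn (v j0) (v k) := by
        rw [← hg0j, detfn_vact]
      have e2 : detfn (w j0) (w k) = detfn (v j0) (v k) := by
        rw [← hg2j, ← hg2k, detfn_vact]
      exact e1.trans e2.symm
  · push_neg at hind
    rcases Nat.eq_zero_or_pos n with hn | hn
    · subst hn; exact ⟨1, fun k => k.elim0⟩
    · set i0 : Fin n := ⟨0, hn⟩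
      obtain ⟨g0, hg0, -⟩ := h2 i0 i0
      refine ⟨g0, fun k => ?_⟩
      obtain ⟨t, ht⟩ := exists_scalar (hv i0) (hind i0 k)
      obtain ⟨g1, hg1i, hg1k⟩ := h2 i0 k
      rw [ht, vact_smul, hg0, ← hg1i, ← vact_smul, ← ht, hg1k]

lemma sq_eq_one_of_fix (htwo : (2 : F) = 0) (g : SL(2,F)) {v : Fin 2 → F} (hv : v ≠ 0)
    (hg : vact g v = v) : g ^ 2 = 1 := by
  have hd : (↑g : Matrix (Fin 2) (Fin 2) F).det = 1 := g.prop
  rw [Matrix.det_fin_two] at hd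
  set a := (↑g : Matrix (Fin 2) (Fin 2) F) 0 0 with ha
  set b := (↑g : Matrix (Fin 2) (Fin 2) F) 0 1 with hb
  set c := (↑g : Matrix (Fin 2) (Fin 2) F) 1 0 with hc
  set d := (↑g : Matrix (Fin 2) (Fin 2) F) 1 1 with hd2
  have e0 : a * v 0 + b * v 1 = v 0 := by
    simpa [vact, Matrix.mulVec, dotProduct, Fin.sum_univ_two, ← ha, ← hb]
      using congrFun hg 0
  have e1 : c * v 0 + d * v 1 = v 1 := by
    simpa [vact, Matrix.mulVec, dotProduct, Fin.sum_univ_two, ← hc, ← hd2]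
      using congrFun hg 1
  have htr : a + d = 0 := by
    have k0 : (a + d) * v 0 = 0 := by
      linear_combination (d - 1) * e0 - b * e1 + v 0 * hd - v 0 * htwo +
        (-(a * d * v 0) + a * v 0 + d * v 0 + v 0 + b * c * v 0) * htwo
    have k1 : (a + d) * v 1 = 0 := by
      linear_combination (a - 1) * e1 - c * e0 + v 1 * hd - v 1 * htwo +
        (-(a * d * v 1) + a * v 1 + d * v 1 + v 1 + b * c * v 1) * htwo
    by_contra h
    apply hv
    funext i
    fin_cases i
    · exact (mul_eq_zero.mp k0).resolve_left h
    · exact (mul_eq_zero.mp k1).resolve_left h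
  have key : ((g : Matrix (Fin 2) (Fin 2) F) * g) = 1 := by
    ext i j
    rw [Matrix.mul_apply, Fin.sum_univ_two]
    fin_cases i <;> fin_cases j <;>
      simp only [Fin.mk_zero, Fin.mk_one, Fin.zero_eta, Matrix.one_apply_eq,
        Matrix.one_apply_ne (by decide : (0:Fin 2) ≠ 1),
        Matrix.one_apply_ne (by decide : (1:Fin 2) ≠ 0), ← ha, ← hb, ← hc, ← hd2]
    · linear_combination -hd + a * htr - htwo
    · norm_num [Matrix.one_apply]
      linear_combination b * htr
    · norm_num [Matrix.one_apply]
      linear_combination c * htr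
    · linear_combination d * htr - hd - htwo
  apply Subtype.ext
  rw [pow_two]
  show ((g : Matrix (Fin 2) (Fin 2) F) * g) = 1
  exact key

/-- stabilizer of a vector as a subgroup of SL(2,F) -/
def stabSub (v : Fin 2 → F) : Subgroup SL(2,F) where
  carrier := {g | vact g v = v}
  mul_mem' := by
    intro a b ha hb
    simp only [Set.mem_setOf_eq] at *
    rw [vact_mul, hb, ha]
  one_mem' := vact_one v
  inv_mem' := by
    intro a ha
    simp only [Set.mem_setOf_eq] at *
    rw [← ha, vact_inv_vact, ha]

lemma mem_stabSub {v : Fin 2 → F} {g : SL(2,F)} : g ∈ stabSub v ↔ vact g v = v := Iff.rfl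

/-- the nonzero vectors, as a type acted on by SL(2,F) -/
instance : MulAction (SL(2,F)) {v : Fin 2 → F // v ≠ 0} where
  smul g v := ⟨vact g v.1, vact_ne_zero g v.2⟩
  one_smul v := Subtype.ext (vact_one v.1)
  mul_smul g h v := Subtype.ext (vact_mul g h v.1)

lemma smul_nz_def (g : SL(2,F)) (v : {v : Fin 2 → F // v ≠ 0}) :
    (g • v).1 = vact g v.1 := rfl

end Aux

theorem stmt5 {F : Type*} [Field F] [Fintype F] (hchar : ringChar F = 2)
    (hcard : 4 ≤ Fintype.card F)
    (P : Sylow 2 (Matrix.SpecialLinearGroup (Fin 2) F)) :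
    IsBinaryCosetAction (P : Subgroup (Matrix.SpecialLinearGroup (Fin 2) F)) := by
  classical
  haveI : CharP F 2 := hchar ▸ ringChar.charP F
  have htwo : (2 : F) = 0 := by exact_mod_cast CharP.cast_eq_zero F 2
  -- the set of nonzero vectors has odd cardinality
  obtain ⟨m, hp2, hcF⟩ := FiniteField.card F 2
  have h2F : 2 ∣ Fintype.card F := hcF ▸ dvd_pow_self 2 m.ne_zero
  have hcardNZ : Nat.card {v : Fin 2 → F // v ≠ 0} = Fintype.card F ^ 2 - 1 := by
    rw [Nat.card_eq_fintype_card, Fintype.card_subtype_compl (fun v : Fin 2 → F => v = 0),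
      Fintype.card_subtype_eq (0 : Fin 2 → F), Fintype.card_fun]
    simp
  have hodd : ¬ (2 ∣ Nat.card {v : Fin 2 → F // v ≠ 0}) := by
    rw [hcardNZ]
    obtain ⟨t, ht⟩ := h2F
    have h4 : 4 ≤ Fintype.card F ^ 2 := by nlinarith
    have he : Fintype.card F ^ 2 = 2 * (2 * t * t) := by rw [ht]; ring
    rw [he]
    omega
  -- a nonzero vector fixed by P
  obtain ⟨v0, hv0fix⟩ := (P.isPGroup').nonempty_fixed_point_of_prime_not_dvd_card
    {v : Fin 2 → F // v ≠ 0} hodd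
  have hle : (P : Subgroup (Matrix.SpecialLinearGroup (Fin 2) F)) ≤ stabSub v0.1 := by
    intro g hg
    have := hv0fix (⟨g, hg⟩ : (P : Subgroup (Matrix.SpecialLinearGroup (Fin 2) F)))
    rw [mem_stabSub]
    have h1 : vact g v0.1 = ((⟨g, hg⟩ : ↥(P : Subgroup (Matrix.SpecialLinearGroup (Fin 2) F))) • v0).1 := rfl
    rw [h1, this]
  have hstabP : IsPGroup 2 (stabSub v0.1) := by
    intro g
    refine ⟨1, ?_⟩
    have hsq : (g : SL(2,F)) ^ 2 = 1 := sq_eq_one_of_fix htwo g v0.2 g.2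
    apply Subtype.ext
    rw [pow_one, SubmonoidClass.coe_pow, hsq]
    rfl
  have hPeq : (P : Subgroup (Matrix.SpecialLinearGroup (Fin 2) F)) = stabSub v0.1 :=
    (P.is_maximal' hstabP hle).symm
  -- now prove binarity
  intro n I J hIJ
  choose x hx using fun k => Quotient.exists_rep (I k)
  choose y hy using fun k => Quotient.exists_rep (J k)
  have key : ∀ (g : SL(2,F)) (k : Fin n),
      rightCosetMul (P : Subgroup (Matrix.SpecialLinearGroup (Fin 2) F)) g (I k) = J k ↔
        vact g⁻¹ (vact (x k)⁻¹ v0.1) = vact (y k)⁻¹ v0.1 := by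
    intro g k
    rw [← hx k, ← hy k]
    have e : rightCosetMul (P : Subgroup (Matrix.SpecialLinearGroup (Fin 2) F)) g ⟦x k⟧ = ⟦y k⟧ ↔
        y k * (x k * g)⁻¹ ∈ (P : Subgroup (Matrix.SpecialLinearGroup (Fin 2) F)) := by
      show Quotient.map _ _ ⟦x k⟧ = ⟦y k⟧ ↔ _
      rw [Quotient.map_mk, Quotient.eq]
      exact QuotientGroup.rightRel_apply
    rw [e, hPeq, mem_stabSub]
    have : y k * (x k * g)⁻¹ = y k * (g⁻¹ * (x k)⁻¹) := by group
    rw [this, vact_mul, vact_mul]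
    rw [vact_eq_iff]
  have h2 : ∀ i j : Fin n, ∃ h : SL(2,F),
      vact h (vact (x i)⁻¹ v0.1) = vact (y i)⁻¹ v0.1 ∧
      vact h (vact (x j)⁻¹ v0.1) = vact (y j)⁻¹ v0.1 := by
    intro i j
    obtain ⟨g, hg1, hg2⟩ := hIJ i j
    exact ⟨g⁻¹, (key g i).mp hg1, (key g j).mp hg2⟩
  obtain ⟨h, hh⟩ := core (fun k => vact (x k)⁻¹ v0.1) (fun k => vact (y k)⁻¹ v0.1)
    (fun k => vact_ne_zero _ v0.2) h2
  refine ⟨h⁻¹, fun k => ?_⟩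
  rw [key h⁻¹ k, inv_inv]
  exact hh k
end

section
/- Let a ≥ 1 be an integer, let F be a finite field of cardinality 2^{2a+1}, and let θ : F → F be the field automorphism θ(x) = x^{2^{a+1}}. For β₁, β₂ ∈ F define the 4×4 matrices over F: h₁ with rows (1,0,0,0), (0,1,0,0), (β₁,0,1,0), (θ(β₁),β₁,0,1), and h₂ with rows (1,0,β₂,θ(β₂)), (0,1,0,β₂), (0,0,1,0), (0,0,0,1). Then (h₁·h₂)² equals the identity matrix if and only if β₁ = 0 or β₂ = 0. -/
open scoped Pointwise MatrixGroups

theorem stmt6 {a : ℕ} (ha : 1 ≤ a) {F : Type*} [Field F] [Fintype F]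
    (hF : Fintype.card F = 2 ^ (2 * a + 1))
    (θ : F → F) (hθ : ∀ x : F, θ x = x ^ 2 ^ (a + 1))
    (β₁ β₂ : F) (h₁ h₂ : Matrix (Fin 4) (Fin 4) F)
    (hh₁ : h₁ = !![1, 0, 0, 0; 0, 1, 0, 0; β₁, 0, 1, 0; θ β₁, β₁, 0, 1])
    (hh₂ : h₂ = !![1, 0, β₂, θ β₂; 0, 1, 0, β₂; 0, 0, 1, 0; 0, 0, 0, 1]) :
    (h₁ * h₂) ^ 2 = 1 ↔ β₁ = 0 ∨ β₂ = 0 := by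
  have h2 : (2 : F) = 0 := by
    have hc := FiniteField.cast_card_eq_zero F
    rw [hF] at hc
    push_cast at hc
    exact pow_eq_zero_iff (by omega) |>.mp hc
  haveI : CharP F 2 := CharTwo.of_one_ne_zero_of_two_eq_zero one_ne_zero h2
  have ht0 : θ 0 = 0 := by rw [hθ]; exact zero_pow (by positivity)
  constructor
  · intro h
    have h01 := congrFun (congrFun h 0) 1
    rw [pow_two, hh₁, hh₂] at h01
    simp [Matrix.mul_apply, Fin.sum_univ_four, Matrix.one_apply] at h01
    rcases h01 with h01 | h01
    · right
      rw [hθ] at h01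
      exact pow_eq_zero_iff (by positivity) |>.mp h01
    · exact Or.inl h01
  · rintro (rfl | rfl)
    · have e1 : h₁ = 1 := by
        rw [hh₁, ht0]
        ext i j
        fin_cases i <;> fin_cases j <;> simp [Matrix.one_apply, Matrix.vecHead, Matrix.vecTail]
      rw [e1, one_mul, pow_two, hh₂]
      ext i j
      fin_cases i <;> fin_cases j <;>
        simp [Matrix.mul_apply, Fin.sum_univ_four, Matrix.one_apply, Matrix.vecHead, Matrix.vecTail,
          CharTwo.add_self_eq_zero]
    · have e2 : h₂ = 1 := by
        rw [hh₂, ht0]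
        ext i j
        fin_cases i <;> fin_cases j <;> simp [Matrix.one_apply, Matrix.vecHead, Matrix.vecTail]
      rw [e2, mul_one, pow_two, hh₁]
      ext i j
      fin_cases i <;> fin_cases j <;>
        simp [Matrix.mul_apply, Fin.sum_univ_four, Matrix.one_apply, Matrix.vecHead, Matrix.vecTail,
          CharTwo.add_self_eq_zero]
end

section
/- Let a ≥ 1 be an integer, let q = 2^{2a+1}, and let F be a finite field of cardinality q². Let C = {x ∈ F : x ≠ 0 and x is a cube in F} be the set of nonzero cubes. Then: (1) the graph with vertex set C, in which distinct x, y ∈ C are joined by an edge if and only if x + y ∈ C, is connected; (2) the set C generates F as an additive group. -/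
open scoped Pointwise MatrixGroups

theorem stmt7 {a : ℕ} (ha : 1 ≤ a) {F : Type*} [Field F] [Fintype F]
    (hF : Fintype.card F = (2 ^ (2 * a + 1)) ^ 2)
    (C : Set F) (hC : C = {x : F | x ≠ 0 ∧ ∃ c : F, x = c ^ 3}) :
    (∀ x ∈ C, ∀ y ∈ C,
        Relation.ReflTransGen
          (fun u v : F => u ∈ C ∧ v ∈ C ∧ u ≠ v ∧ u + v ∈ C) x y) ∧
    AddSubgroup.closure C = ⊤ := by
  classical
  set q : ℕ := 2 ^ (2 * a + 1) with hqdef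
  have hq8 : 8 ≤ q := by
    calc (8:ℕ) = 2 ^ 3 := by norm_num
    _ ≤ 2 ^ (2 * a + 1) := Nat.pow_le_pow_right (by norm_num) (by omega)
  -- 3 ∣ q + 1
  obtain ⟨m, hm⟩ : 3 ∣ q + 1 := by
    have h4 : (4:ℕ) ^ a % 3 = 1 := by
      rw [Nat.pow_mod]; simp
    have : q = 2 * 4 ^ a := by
      rw [hqdef, pow_succ, pow_mul]; ring
    omega
  have hm3 : 3 ≤ m := by omega
  set M : ℕ := (q - 1) * m with hMdef
  have hq2 : q ^ 2 - 1 = 3 * M := by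
    obtain ⟨s, hs⟩ : ∃ s, q = s + 1 := ⟨q - 1, by omega⟩
    have hM' : M = s * m := by rw [hMdef, hs]; simp
    have h1 : (s + 1) ^ 2 = s * (s + 2) + 1 := by ring
    have h2 : s + 2 = 3 * m := by omega
    rw [hs, h1, h2, hM', Nat.add_sub_cancel]; ring
  have hMpos : 0 < M := by
    have : 1 ≤ q - 1 := by omega
    calc 0 < 1 * 3 := by norm_num
    _ ≤ (q - 1) * m := Nat.mul_le_mul this hm3
  have hcardF : Fintype.card F = q ^ 2 := hF
  have hcardU : Fintype.card Fˣ = 3 * M := by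
    rw [Fintype.card_units, hcardF, hq2]
  -- characteristic 2
  have hchar : CharP F 2 := by
    have hp := ringChar.charP F
    obtain ⟨n, hn, hcard⟩ := FiniteField.card F (ringChar F)
    have h2 : ringChar F = 2 := by
      have hFe : Fintype.card F = 2 ^ ((2 * a + 1) * 2) := by
        rw [hcardF, hqdef, ← pow_mul]
      have hd : ringChar F ∣ 2 ^ ((2 * a + 1) * 2) := by
        rw [← hFe, hcard]
        exact dvd_pow_self _ n.ne_zero
      have := hn.dvd_of_dvd_pow hd
      exact (Nat.prime_dvd_prime_iff_eq hn Nat.prime_two).mp this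
    rwa [h2] at hp
  haveI := hchar
  -- frobenius is additive
  have frob_add : ∀ x y : F, (x + y) ^ q = x ^ q + y ^ q := by
    intro x y
    exact add_pow_char_pow x y 2 (2 * a + 1)
  have pow_qq : ∀ x : F, (x ^ q) ^ q = x := by
    intro x
    rw [← pow_mul, ← sq, ← hcardF, FiniteField.pow_card]
  -- membership criterion for C
  have cube_of : ∀ w : F, w ≠ 0 → w ^ M = 1 → w ∈ C := by
    intro w hw hwM
    obtain ⟨g, hg⟩ := IsCyclic.exists_generator (α := Fˣ)
    have hog : orderOf g = 3 * M := by
      rw [orderOf_eq_card_of_forall_mem_zpowers hg, Nat.card_eq_fintype_card, hcardU]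
    set wu : Fˣ := Units.mk0 w hw with hwu
    obtain ⟨k, hk'⟩ := (mem_powers_iff_mem_zpowers).mpr (hg wu)
    have hk : g ^ k = wu := hk'
    have hwuM : wu ^ M = 1 := by
      ext
      push_cast [hwu]
      exact hwM
    have h3k : 3 ∣ k := by
      have : orderOf g ∣ k * M := by
        apply orderOf_dvd_of_pow_eq_one
        rw [pow_mul, hk, hwuM]
      rw [hog] at this
      have := (Nat.mul_dvd_mul_iff_right hMpos).mp this
      exact this
    obtain ⟨j, hj⟩ := h3k
    rw [hC]
    refine ⟨hw, ((g ^ j : Fˣ) : F), ?_⟩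
    have : wu = (g ^ j) ^ 3 := by rw [← pow_mul, mul_comm, ← hj, hk]
    calc w = ((wu : Fˣ) : F) := rfl
    _ = (((g ^ j) ^ 3 : Fˣ) : F) := by rw [← this]
    _ = ((g ^ j : Fˣ) : F) ^ 3 := by push_cast; ring
  -- subfield elements are cubes
  have hKmem : ∀ t : F, t ^ q = t → t ≠ 0 → t ∈ C := by
    intro t ht ht0
    apply cube_of t ht0
    have h1 : t ^ (q - 1) * t = t := by
      rw [← pow_succ]
      have : q - 1 + 1 = q := by omega
      rw [this, ht]
    have h2 : t ^ (q - 1) = 1 := by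
      have h1' : t ^ (q - 1) * t = 1 * t := by rw [one_mul, h1]
      exact mul_right_cancel₀ ht0 h1'
    rw [hMdef, pow_mul, h2, one_pow]
  -- the subfield Finset
  set Kf : Finset F := Finset.univ.filter (fun t => t ^ q = t) with hKf
  have hKf_mem : ∀ t : F, t ∈ Kf ↔ t ^ q = t := by
    intro t; simp [hKf]
  -- card of Kf is q
  have hq1 : 1 < q := by omega
  have hub : Kf.card ≤ q := by
    have hdeg : (Polynomial.X ^ q - Polynomial.X : Polynomial F).natDegree = q :=
      FiniteField.X_pow_card_sub_X_natDegree_eq F hq1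
    have hPne : (Polynomial.X ^ q - Polynomial.X : Polynomial F) ≠ 0 :=
      FiniteField.X_pow_card_sub_X_ne_zero F hq1
    have hsub : Kf ⊆ (Polynomial.X ^ q - Polynomial.X : Polynomial F).roots.toFinset := by
      intro t ht
      rw [Multiset.mem_toFinset, Polynomial.mem_roots hPne]
      simp only [Polynomial.IsRoot, Polynomial.eval_sub, Polynomial.eval_pow,
        Polynomial.eval_X, sub_eq_zero]
      exact (hKf_mem t).mp ht
    calc Kf.card ≤ _ := Finset.card_le_card hsub
    _ ≤ Multiset.card (Polynomial.X ^ q - Polynomial.X : Polynomial F).roots :=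
        Multiset.toFinset_card_le _
    _ ≤ _ := Polynomial.card_roots' _
    _ = q := hdeg
  have hKcard : Kf.card = q := by
    set ψ : F →+ F := AddMonoidHom.mk' (fun x => x ^ q + x)
      (fun x y => by show (x + y) ^ q + (x + y) = (x ^ q + x) + (y ^ q + y); rw [frob_add]; ring) with hψ
    have hker : (ψ.ker : Set F) = ↑Kf := by
      ext x
      have hx : ψ x = x ^ q + x := rfl
      simp only [SetLike.mem_coe, AddMonoidHom.mem_ker, hx, Finset.mem_coe, hKf_mem]
      rw [CharTwo.add_eq_iff_eq_add, zero_add]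
    have hrk : ψ.range ≤ ψ.ker := by
      rintro y ⟨x, rfl⟩
      rw [AddMonoidHom.mem_ker]
      show (x ^ q + x) ^ q + (x ^ q + x) = 0
      have h1 : (x ^ q + x) ^ q + (x ^ q + x) = (x + x ^ q) + (x ^ q + x) := by
        rw [frob_add, pow_qq]
      rw [h1, show (x + x ^ q) = (x ^ q + x) from add_comm _ _]
      exact CharTwo.add_self_eq_zero _
    have hcards : Nat.card F = Nat.card (F ⧸ ψ.ker) * Nat.card ψ.ker :=
      AddSubgroup.card_eq_card_quotient_mul_card_addSubgroup _
    have hquot : Nat.card (F ⧸ ψ.ker) = Nat.card ψ.range :=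
      Nat.card_congr (QuotientAddGroup.quotientKerEquivRange ψ).toEquiv
    have hle : Nat.card ψ.range ≤ Nat.card ψ.ker := AddSubgroup.card_le_of_le hrk
    have hkKf : Nat.card ψ.ker = Kf.card := by
      have : Nat.card ψ.ker = Nat.card ((ψ.ker : Set F) : Type _) := rfl
      rw [this, hker, Nat.card_coe_set_eq, Set.ncard_coe_finset]
    have hcF : Nat.card F = q ^ 2 := by rw [Nat.card_eq_fintype_card, hcardF]
    rw [hcF, hquot, hkKf] at hcards
    rw [hkKf] at hle
    have h1 : q * q ≤ Kf.card * Kf.card := by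
      calc q * q = q ^ 2 := (sq q).symm
      _ = Nat.card ψ.range * Kf.card := hcards
      _ ≤ Kf.card * Kf.card := Nat.mul_le_mul_right _ hle
    have h2 : q ≤ Kf.card := Nat.mul_self_le_mul_self_iff.mp h1
    omega
  -- U
  set Uf : Finset F := Finset.univ.filter (fun u => u ^ (q + 1) = 1) with hUf
  have hUcard : Uf.card ≤ q + 1 := by
    have hPne : (Polynomial.X ^ (q + 1) - Polynomial.C 1 : Polynomial F) ≠ 0 :=
      Polynomial.X_pow_sub_C_ne_zero (by omega) 1
    have hsub : Uf ⊆ (Polynomial.X ^ (q + 1) - Polynomial.C 1 : Polynomial F).roots.toFinset := by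
      intro u hu
      rw [Multiset.mem_toFinset, Polynomial.mem_roots hPne]
      simp only [Polynomial.IsRoot, Polynomial.eval_sub, Polynomial.eval_pow,
        Polynomial.eval_X, Polynomial.eval_C, sub_eq_zero]
      simpa [hUf] using hu
    calc Uf.card ≤ _ := Finset.card_le_card hsub
    _ ≤ Multiset.card (Polynomial.X ^ (q + 1) - Polynomial.C 1 : Polynomial F).roots :=
        Multiset.toFinset_card_le _
    _ ≤ _ := Polynomial.card_roots' _
    _ = q + 1 := Polynomial.natDegree_X_pow_sub_C
  -- U3
  have hmpos : 0 < m := by omega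
  have hU3card : (Polynomial.nthRootsFinset m (1 : F)).card = m := by
    obtain ⟨g, hg⟩ := IsCyclic.exists_generator (α := Fˣ)
    have hog : orderOf g = 3 * M := by
      rw [orderOf_eq_card_of_forall_mem_zpowers hg, Nat.card_eq_fintype_card, hcardU]
    have hogm : orderOf (g ^ (3 * (q - 1))) = m := by
      rw [orderOf_pow, hog]
      have h1 : 3 * M = 3 * (q - 1) * m := by rw [hMdef]; ring
      have h2 : Nat.gcd (3 * (q - 1) * m) (3 * (q - 1)) = 3 * (q - 1) :=
        Nat.gcd_eq_right ⟨m, rfl⟩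
      rw [h1, h2]
      exact Nat.mul_div_cancel_left m (by omega)
    have hprim : IsPrimitiveRoot ((g ^ (3 * (q - 1)) : Fˣ) : F) m := by
      rw [← hogm]
      exact (IsPrimitiveRoot.coe_units_iff).mpr (IsPrimitiveRoot.orderOf _)
    exact hprim.card_nthRootsFinset
  -- the key counting lemma
  have hD : ∀ z : F, z ^ q ≠ z → ∃ t : F, t ^ q = t ∧ t ≠ 0 ∧ z + t ∈ C := by
    intro z hz
    have hzt_ne : ∀ t : F, t ∈ Kf → z + t ≠ 0 := by
      intro t ht h0
      have ht' : t ^ q = t := (hKf_mem t).mp ht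
      have hzt : z = t := by
        rw [← CharTwo.neg_eq (R := F) t]
        exact eq_neg_of_add_eq_zero_left h0
      exact hz (by rw [hzt, ht'])
    set gv : F → F := fun t => (z + t) ^ (q - 1) with hgv
    have hginj : Set.InjOn gv ↑Kf := by
      intro s hs t ht hst
      by_contra hne
      have hs' : s ^ q = s := (hKf_mem s).mp hs
      have ht' : t ^ q = t := (hKf_mem t).mp ht
      have hzs0 : z + s ≠ 0 := hzt_ne s hs
      have hzt0 : z + t ≠ 0 := hzt_ne t ht
      have e1 : (z + s) ^ q * (z + t) = (z + t) ^ q * (z + s) := by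
        have h1 : (z + s) ^ q = (z + s) ^ (q - 1) * (z + s) := by
          rw [← pow_succ]; congr 1; omega
        have h2 : (z + t) ^ q = (z + t) ^ (q - 1) * (z + t) := by
          rw [← pow_succ]; congr 1; omega
        have hst' : (z + s) ^ (q - 1) = (z + t) ^ (q - 1) := hst
        rw [h1, h2, hst']; ring
      have e2 : (z ^ q + s) * (z + t) = (z ^ q + t) * (z + s) := by
        rw [frob_add, frob_add, hs', ht'] at e1
        exact e1
      have e3 : (z ^ q - z) * (t - s) = 0 := by linear_combination e2
      rcases mul_eq_zero.mp e3 with h | h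
      · exact hz (sub_eq_zero.mp h)
      · exact hne (sub_eq_zero.mp h).symm
    set Kf' : Finset F := Kf.erase 0 with hKf'
    have h0K : (0 : F) ∈ Kf := (hKf_mem 0).mpr (zero_pow (by omega))
    have hK'card : Kf'.card = q - 1 := by
      rw [hKf', Finset.card_erase_of_mem h0K, hKcard]
    set A : Finset F := Kf'.image gv with hA
    have hAcard : A.card = q - 1 := by
      rw [hA, Finset.card_image_of_injOn (hginj.mono (by
        intro x hx
        exact Finset.mem_coe.mpr (Finset.mem_of_mem_erase (Finset.mem_coe.mp hx)))), hK'card]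
    have hexp : (q - 1) * (q + 1) = Fintype.card F - 1 := by
      rw [hcardF, hq2, hm, hMdef]; ring
    have hAU : A ⊆ Uf := by
      intro u hu
      obtain ⟨t, htK', rfl⟩ := Finset.mem_image.mp hu
      have htK : t ∈ Kf := Finset.mem_of_mem_erase htK'
      simp only [hUf, Finset.mem_filter, Finset.mem_univ, true_and]
      show ((z + t) ^ (q - 1)) ^ (q + 1) = 1
      rw [← pow_mul, hexp]
      exact FiniteField.pow_card_sub_one_eq_one _ (hzt_ne t htK)
    have hU3U : Polynomial.nthRootsFinset m (1 : F) ⊆ Uf := by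
      intro u hu
      have hum : u ^ m = 1 := (Polynomial.mem_nthRootsFinset hmpos 1).mp hu
      simp only [hUf, Finset.mem_filter, Finset.mem_univ, true_and]
      rw [hm, mul_comm, pow_mul, hum, one_pow]
    have hcap : 0 < (A ∩ Polynomial.nthRootsFinset m (1 : F)).card := by
      have hunion : (A ∪ Polynomial.nthRootsFinset m (1 : F)).card ≤ q + 1 :=
        le_trans (Finset.card_le_card (Finset.union_subset hAU hU3U)) hUcard
      have hie := Finset.card_inter_add_card_union A (Polynomial.nthRootsFinset m (1 : F))
      rw [hAcard, hU3card] at hie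
      omega
    obtain ⟨u, hu⟩ := Finset.card_pos.mp hcap
    obtain ⟨hu1, hu2⟩ := Finset.mem_inter.mp hu
    obtain ⟨t, htK', hgt⟩ := Finset.mem_image.mp hu1
    have htK : t ∈ Kf := Finset.mem_of_mem_erase htK'
    have ht0 : t ≠ 0 := Finset.ne_of_mem_erase htK'
    refine ⟨t, (hKf_mem t).mp htK, ht0, ?_⟩
    apply cube_of _ (hzt_ne t htK)
    have hum : u ^ m = 1 := (Polynomial.mem_nthRootsFinset hmpos 1).mp hu2
    calc (z + t) ^ M = ((z + t) ^ (q - 1)) ^ m := by rw [← pow_mul, hMdef]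
    _ = u ^ m := by rw [show (z + t) ^ (q - 1) = gv t from rfl, hgt]
    _ = 1 := hum
  have hC0 : ∀ x ∈ C, x ≠ 0 := fun x hx => (hC ▸ hx).1
  have hone : (1 : F) ∈ C := by rw [hC]; exact ⟨one_ne_zero, 1, by ring⟩
  have hmul : ∀ x ∈ C, ∀ y ∈ C, x * y ∈ C := by
    intro x hx y hy
    rw [hC] at hx hy ⊢
    obtain ⟨hx0, c, rfl⟩ := hx
    obtain ⟨hy0, d, rfl⟩ := hy
    exact ⟨mul_ne_zero hx0 hy0, c * d, by ring⟩
  have hinv : ∀ x ∈ C, x⁻¹ ∈ C := by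
    intro x hx
    rw [hC] at hx ⊢
    obtain ⟨hx0, c, rfl⟩ := hx
    exact ⟨inv_ne_zero hx0, c⁻¹, by rw [inv_pow]⟩
  constructor
  · have step_to_one : ∀ w ∈ C, w ^ q = w → w ≠ 1 →
        Relation.ReflTransGen (fun u v : F => u ∈ C ∧ v ∈ C ∧ u ≠ v ∧ u + v ∈ C) w 1 := by
      intro w hw hwq hw1
      apply Relation.ReflTransGen.single
      refine ⟨hw, hone, hw1, ?_⟩
      apply hKmem
      · rw [frob_add, hwq, one_pow]
      · intro h
        apply hw1
        have : w = -1 := eq_neg_of_add_eq_zero_left h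
        rwa [CharTwo.neg_eq] at this
    have path1 : ∀ z ∈ C,
        Relation.ReflTransGen (fun u v : F => u ∈ C ∧ v ∈ C ∧ u ≠ v ∧ u + v ∈ C) z 1 := by
      intro z hz
      by_cases h1 : z = 1
      · rw [h1]
      by_cases hzK : z ^ q = z
      · exact step_to_one z hz hzK h1
      obtain ⟨t, htq, ht0, hztC⟩ := hD z hzK
      have htC : t ∈ C := hKmem t htq ht0
      have hzt : z ≠ t := by rintro rfl; exact hzK htq
      by_cases ht1 : t = 1
      · exact Relation.ReflTransGen.single ⟨hz, htC, hzt, hztC⟩ |>.trans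
          (by rw [ht1])
      · exact Relation.ReflTransGen.head ⟨hz, htC, hzt, hztC⟩
          (step_to_one t htC htq ht1)
    intro x hx y hy
    have hyne : y ≠ 0 := hC0 y hy
    have hzC : x * y⁻¹ ∈ C := hmul x hx _ (hinv y hy)
    have hstep : ∀ u v : F, (u ∈ C ∧ v ∈ C ∧ u ≠ v ∧ u + v ∈ C) →
        (u * y ∈ C ∧ v * y ∈ C ∧ u * y ≠ v * y ∧ u * y + v * y ∈ C) := by
      intro u v ⟨hu, hv, huvne, hsum⟩
      exact ⟨hmul u hu y hy, hmul v hv y hy,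
        fun h => huvne (mul_right_cancel₀ hyne h),
        by rw [← add_mul]; exact hmul _ hsum y hy⟩
    have hlift := Relation.ReflTransGen.lift
      (p := fun u v : F => u ∈ C ∧ v ∈ C ∧ u ≠ v ∧ u + v ∈ C)
      (fun u : F => u * y) hstep _ _ (path1 _ hzC)
    simpa [Function.onFun, inv_mul_cancel_right₀ hyne] using hlift
  · rw [eq_top_iff]
    intro x _
    rcases eq_or_ne x 0 with rfl | hx0
    · exact zero_mem _
    by_cases hxK : x ^ q = x
    · exact AddSubgroup.subset_closure (hKmem x hxK hx0)
    obtain ⟨t, htq, ht0, hxtC⟩ := hD x hxK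
    have hx' : x = (x + t) + t := by
      rw [add_assoc, CharTwo.add_self_eq_zero, add_zero]
    rw [hx']
    exact add_mem (AddSubgroup.subset_closure hxtC)
      (AddSubgroup.subset_closure (hKmem t htq ht0))
end

section
/- Let a ≥ 1 be an integer, let q = 2^{2a+1}, let F be a finite field of cardinality q², and let m = (q+1)/3 (note 3 divides q+1). If x ∈ F satisfies x^m = 1 and x ≠ 1, then 1 + x is a nonzero cube in F, i.e., 1 + x = c³ for some c ∈ Fˣ. -/
open scoped Pointwise MatrixGroups

theorem stmt8 {a : ℕ} (ha : 1 ≤ a) (q : ℕ) (hq : q = 2 ^ (2 * a + 1))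
    {F : Type*} [Field F] [Fintype F] (hF : Fintype.card F = q ^ 2)
    (m : ℕ) (hm : m = (q + 1) / 3)
    (x : F) (hx : x ^ m = 1) (hx1 : x ≠ 1) :
    ∃ c : F, c ≠ 0 ∧ 1 + x = c ^ 3 := by
  -- basic numerics
  have hq8 : 8 ≤ q := by
    rw [hq]
    calc (8:ℕ) = 2 ^ 3 := by norm_num
    _ ≤ 2 ^ (2 * a + 1) := Nat.pow_le_pow_right (by norm_num) (by omega)
  have hdvd3 : 3 ∣ q + 1 := by
    have h4 : 4 ^ a % 3 = 1 := by
      rw [Nat.pow_mod]; simp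
    have hq' : q = 2 * 4 ^ a := by
      rw [hq, pow_succ, pow_mul]; norm_num; ring
    omega
  have h3m : 3 * m = q + 1 := by omega
  have hm0 : m ≠ 0 := by omega
  -- characteristic 2
  haveI : Fact (Nat.Prime 2) := ⟨Nat.prime_two⟩
  haveI hcharp : CharP F (ringChar F) := ringChar.charP F
  have hp : (ringChar F).Prime := CharP.char_is_prime F (ringChar F)
  haveI hfp : Fact (ringChar F).Prime := ⟨hp⟩
  obtain ⟨n, hn⟩ := FiniteField.card F (ringChar F)
  have hchar2 : ringChar F = 2 := by
    have h2 : ringChar F ∣ 2 := by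
      have : ringChar F ∣ (ringChar F) ^ (n : ℕ) := dvd_pow_self _ n.ne_zero
      rw [← hn.2, hF, hq, ← pow_mul] at this
      exact hp.dvd_of_dvd_pow this
    exact (Nat.prime_dvd_prime_iff_eq hp Nat.prime_two).mp h2
  haveI : CharP F 2 := hchar2 ▸ hcharp
  -- 1 + x ≠ 0
  have h1x : (1 : F) + x ≠ 0 := by
    intro h
    apply hx1
    have : x = -1 := by linear_combination h
    rw [this, CharTwo.neg_eq]
  haveI : DecidableEq F := Classical.decEq F
  have hx0 : x ≠ 0 := by
    intro h; rw [h, zero_pow hm0] at hx; exact zero_ne_one hx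
  -- Frobenius
  have hqpow : (1 + x) ^ q = 1 + x ^ q := by
    rw [hq, add_pow_char_pow, one_pow]
  have hxq1 : x ^ (q + 1) = 1 := by
    rw [← h3m, mul_comm, pow_mul, hx, one_pow]
  -- key: (1+x)^(q-1) * x = 1
  have key1 : (1 + x) ^ (q - 1) * x = 1 := by
    apply mul_right_cancel₀ h1x
    have e1 : (1 + x) ^ (q - 1) * x * (1 + x) = (1 + x) ^ q * x := by
      rw [show (1+x)^(q-1) * x * (1+x) = (1+x)^(q-1) * (1+x) * x by ring, ← pow_succ]
      congr 2
      omega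
    rw [e1, hqpow]
    have : (1 + x ^ q) * x = x + x ^ (q + 1) := by rw [pow_succ]; ring
    rw [this, hxq1]; ring
  have hkey : (1 + x) ^ (m * (q - 1)) = 1 := by
    have h1 : (1 + x) ^ (q - 1) = x⁻¹ := eq_inv_of_mul_eq_one_left (by linear_combination key1)
    rw [pow_mul', h1, inv_pow, hx, inv_one]
  -- move to units
  set u : Fˣ := Units.mk0 (1 + x) h1x with hu_def
  have hu : u ^ (m * (q - 1)) = 1 := by
    ext
    push_cast [hu_def]
    exact hkey
  have hcardu : Fintype.card Fˣ = 3 * (m * (q - 1)) := by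
    rw [Fintype.card_units, hF]
    have : q ^ 2 - 1 = (q + 1) * (q - 1) := by
      have := Nat.sq_sub_sq q 1
      simpa using this
    rw [this, ← h3m, mul_assoc]
  -- cyclic group argument
  obtain ⟨g, hg⟩ := IsCyclic.exists_generator (α := Fˣ)
  have hord : orderOf g = Fintype.card Fˣ := by
    rw [orderOf_eq_card_of_forall_mem_zpowers hg, Nat.card_eq_fintype_card]
  obtain ⟨k, hk0⟩ := hg u
  have hk : g ^ k = u := hk0
  have hzpow : g ^ (k * ((m * (q - 1) : ℕ) : ℤ)) = 1 := by
    rw [zpow_mul, hk, zpow_natCast, hu]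
  have hdvd : ((3 : ℤ) * ((m * (q - 1) : ℕ) : ℤ)) ∣ k * ((m * (q - 1) : ℕ) : ℤ) := by
    have := orderOf_dvd_iff_zpow_eq_one.mpr hzpow
    rw [hord, hcardu] at this
    exact_mod_cast this
  have hM0 : ((m * (q - 1) : ℕ) : ℤ) ≠ 0 := by
    have : m * (q - 1) ≠ 0 := by
      apply Nat.mul_ne_zero hm0; omega
    exact_mod_cast this
  have h3k : (3 : ℤ) ∣ k := by
    rwa [mul_comm (3:ℤ) _, mul_comm k _, mul_dvd_mul_iff_left hM0] at hdvd
  obtain ⟨j, hj⟩ := h3k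
  refine ⟨((g ^ j : Fˣ) : F), Units.ne_zero _, ?_⟩
  have hc3 : (g ^ j) ^ (3 : ℕ) = u := by
    rw [← zpow_natCast (g ^ j) 3, ← zpow_mul, show (j * ((3:ℕ):ℤ)) = k by omega, hk]
  calc (1 : F) + x = ((u : Fˣ) : F) := rfl
  _ = (((g ^ j) ^ (3:ℕ) : Fˣ) : F) := by rw [hc3]
  _ = ((g ^ j : Fˣ) : F) ^ 3 := by push_cast; ring
end

section
/- Let G be a finite group with a normal subgroup N and a subgroup T such that N ∩ T = {1} and NT = G (so G = N ⋊ T). Let K be a normal subgroup of G with K ⊆ N, and set A = N \ K. Let T₀ be a subgroup of T, and assume: (i) for every t ∈ T with t ≠ 1 and every a ∈ A, t⁻¹at ≠ a (T acts freely on A by conjugation); (ii) every element of T₀ commutes with every element of K; (iii) for all t ∈ T and k ∈ K with k ≠ 1, if t⁻¹kt = k then t ∈ T₀ (the conjugation action of T on K \ {1} factors through a free action of T/T₀); (iv) the index |N : K| > 1 and |T₀| > 1. If the action of G on the set of right cosets of T by right multiplication is binary, then T₀ = T; moreover, if |N : K| > 2 then |T| ≤ 1 + 2|K|. -/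
open scoped Pointwise MatrixGroups

namespace Stmt9Proof
variable {G : Type*} [Group G]

def pt (T : Subgroup G) (x : G) : Quotient (QuotientGroup.rightRel T) :=
  Quotient.mk _ x

lemma rcm_pt (T : Subgroup G) (g x : G) :
    rightCosetMul T g (pt T x) = pt T (x * g) := rfl

lemma pt_eq {T : Subgroup G} {x y : G} : pt T x = pt T y ↔ y * x⁻¹ ∈ T := by
  rw [pt, pt, Quotient.eq]
  exact QuotientGroup.rightRel_apply

lemma pair_exists (T : Subgroup G) {v : G} (x y x' y' : G) (hv : v ∈ T)
    (h : y' * x'⁻¹ = v⁻¹ * (y * x⁻¹) * v) :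
    ∃ g : G, rightCosetMul T g (pt T x) = pt T x' ∧
      rightCosetMul T g (pt T y) = pt T y' := by
  refine ⟨x⁻¹ * v * x', ?_, ?_⟩ <;> rw [rcm_pt, pt_eq]
  · have : x' * (x * (x⁻¹ * v * x'))⁻¹ = v⁻¹ := by group
    rw [this]; exact inv_mem hv
  · have hy' : y' = (v⁻¹ * (y * x⁻¹) * v) * x' := by
      rw [← h]; group
    have : y' * (y * (x⁻¹ * v * x'))⁻¹ = v⁻¹ := by rw [hy']; group
    rw [this]; exact inv_mem hv

lemma mem_T_of {T : Subgroup G} {g : G}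
    (h : rightCosetMul T g (pt T 1) = pt T 1) : g ∈ T := by
  rw [rcm_pt, pt_eq] at h
  simpa using inv_mem h

lemma conj_of {N T : Subgroup G} (hNT : N ⊓ T = ⊥) [N.Normal] {g x x' : G}
    (hg : g ∈ T) (hx : x ∈ N) (hx' : x' ∈ N)
    (h : rightCosetMul T g (pt T x) = pt T x') : x' = g⁻¹ * x * g := by
  rw [rcm_pt, pt_eq] at h
  have hmemN : x' * (g⁻¹ * x⁻¹ * g) ∈ N := by
    refine mul_mem hx' ?_
    have := Subgroup.Normal.conj_mem (inferInstance : N.Normal) x⁻¹ (inv_mem hx) g⁻¹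
    simpa using this
  have hmemT : x' * (g⁻¹ * x⁻¹ * g) ∈ T := by
    have : x' * (g⁻¹ * x⁻¹ * g) = (x' * (x * g)⁻¹) * g := by group
    rw [this]; exact mul_mem h hg
  have : x' * (g⁻¹ * x⁻¹ * g) = 1 := by
    have := hNT ▸ (Subgroup.mem_inf.mpr ⟨hmemN, hmemT⟩)
    simpa using this
  have := mul_eq_one_iff_eq_inv.mp this
  rw [this]; group

lemma keyM (N T K : Subgroup G) [N.Normal] (hNT : N ⊓ T = ⊥)
    (hfree : ∀ t ∈ T, t ≠ 1 → ∀ a : G, a ∈ N → a ∉ K → t⁻¹ * a * t ≠ a)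
    (hbin : IsBinaryCosetAction T)
    {X b s v : G} (hXN : X ∈ N) (hXK : X ∉ K) (hbN : b ∈ N)
    (hs : s ∈ T) (hv : v ∈ T)
    (heq : X * (s⁻¹ * X * s)⁻¹ = b⁻¹ * (v⁻¹ * b * v)) :
    s⁻¹ * (b * X) * s = b * X := by
  have hpairs : ∀ i j : Fin 3, ∃ g : G,
      rightCosetMul T g (![pt T 1, pt T X, pt T (b * X)] i) =
        ![pt T 1, pt T (s⁻¹ * X * s), pt T (b * X)] i ∧
      rightCosetMul T g (![pt T 1, pt T X, pt T (b * X)] j) =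
        ![pt T 1, pt T (s⁻¹ * X * s), pt T (b * X)] j := by
    intro i j
    fin_cases i <;> fin_cases j <;>
      simp only [Matrix.cons_val_zero, Matrix.cons_val_one, Matrix.head_cons,
        Matrix.cons_val_two, Matrix.tail_cons, Fin.isValue]
    · exact pair_exists T 1 1 1 1 (one_mem T) (by group)
    · exact pair_exists T 1 X 1 (s⁻¹ * X * s) hs (by group)
    · exact pair_exists T 1 (b*X) 1 (b*X) (one_mem T) (by group)
    · obtain ⟨g, ha, hb⟩ := pair_exists T X 1 (s⁻¹*X*s) 1 hs (by group)
      exact ⟨g, ha, hb⟩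
    · exact pair_exists T X X (s⁻¹*X*s) (s⁻¹*X*s) hs (by group)
    · refine pair_exists T X (b*X) (s⁻¹*X*s) (b*X) hv ?_
      have : (b*X) * (s⁻¹*X*s)⁻¹ = b * (X * (s⁻¹*X*s)⁻¹) := by group
      rw [this, heq]; group
    · obtain ⟨g, ha, hb⟩ := pair_exists T (b*X) 1 (b*X) 1 (one_mem T) (by group)
      exact ⟨g, ha, hb⟩
    · have hcond : (b*X) * (s⁻¹*X*s)⁻¹ = v⁻¹ * ((b*X) * X⁻¹) * v := by
        have h' : (b*X) * (s⁻¹*X*s)⁻¹ = b * (X * (s⁻¹*X*s)⁻¹) := by group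
        rw [h', heq]; group
      obtain ⟨g, ha, hb⟩ := pair_exists T X (b*X) (s⁻¹*X*s) (b*X) hv hcond
      exact ⟨g, hb, ha⟩
    · exact pair_exists T (b*X) (b*X) (b*X) (b*X) (one_mem T) (by group)
  obtain ⟨g, hg⟩ := hbin 3 ![pt T 1, pt T X, pt T (b * X)]
      ![pt T 1, pt T (s⁻¹ * X * s), pt T (b * X)] hpairs
  have h0 : rightCosetMul T g (pt T 1) = pt T 1 := hg 0
  have h1 : rightCosetMul T g (pt T X) = pt T (s⁻¹ * X * s) := hg 1
  have h2 : rightCosetMul T g (pt T (b * X)) = pt T (b * X) := hg 2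
  have hgT : g ∈ T := mem_T_of h0
  have hXsN : s⁻¹ * X * s ∈ N := by
    have := Subgroup.Normal.conj_mem (inferInstance : N.Normal) X hXN s⁻¹
    simpa using this
  have hc1 : s⁻¹ * X * s = g⁻¹ * X * g := conj_of hNT hgT hXN hXsN h1
  have hgs : g = s := by
    by_contra hne
    have hr : s * g⁻¹ ∈ T := mul_mem hs (inv_mem hgT)
    have hrne : s * g⁻¹ ≠ 1 := fun h => hne (mul_inv_eq_one.mp h).symm
    refine hfree (s * g⁻¹) hr hrne X hXN hXK ?_
    have : (s * g⁻¹)⁻¹ * X * (s * g⁻¹) = g * (s⁻¹ * X * s) * g⁻¹ := by group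
    rw [this, hc1]; group
  have hbXN : b * X ∈ N := mul_mem hbN hXN
  have := conj_of hNT hgT hbXN hbXN h2
  rw [hgs] at this
  exact this.symm

lemma card_nbar (N K : Subgroup G) [K.Normal] (hKN : K ≤ N) :
    Nat.card (N.map (QuotientGroup.mk' K)) = K.relIndex N := by
  set π := QuotientGroup.mk' K
  set φ : N →* G ⧸ K := π.comp N.subtype with hφ
  have hker : φ.ker = K.subgroupOf N := by
    ext x
    simp only [hφ, MonoidHom.mem_ker, MonoidHom.comp_apply, Subgroup.coe_subtype,
      Subgroup.mem_subgroupOf]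
    exact QuotientGroup.eq_one_iff _
  have hrange : φ.range = N.map π := by
    rw [hφ, MonoidHom.range_comp, Subgroup.range_subtype]
  have e := QuotientGroup.quotientKerEquivRange φ
  rw [← hrange, ← Nat.card_congr e.toEquiv, hker]
  rw [Subgroup.relIndex, Subgroup.index_eq_card]

lemma card_N_eq (N K : Subgroup G) (hKN : K ≤ N) :
    Nat.card N = Nat.card K * K.relIndex N := by
  rw [← Subgroup.card_mul_index (K.subgroupOf N), Subgroup.relIndex,
    Nat.card_congr (Subgroup.subgroupOfEquivOfLe hKN).toEquiv]

end Stmt9Proof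

set_option maxHeartbeats 2000000 in
theorem stmt9 {G : Type*} [Group G] [Finite G] (N T K T₀ : Subgroup G)
    [N.Normal] [K.Normal]
    (hNT : N ⊓ T = ⊥) (hNTall : (N : Set G) * (T : Set G) = Set.univ)
    (hKN : K ≤ N) (hT₀T : T₀ ≤ T)
    (hfree : ∀ t ∈ T, t ≠ 1 → ∀ a : G, a ∈ N → a ∉ K → t⁻¹ * a * t ≠ a)
    (hcomm : ∀ t ∈ T₀, ∀ k ∈ K, t * k = k * t)
    (hfix : ∀ t ∈ T, ∀ k ∈ K, k ≠ 1 → t⁻¹ * k * t = k → t ∈ T₀)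
    (hNK : 1 < K.relIndex N) (hT₀ : 1 < Nat.card T₀)
    (hbin : IsBinaryCosetAction T) :
    T₀ = T ∧ (2 < K.relIndex N → Nat.card T ≤ 1 + 2 * Nat.card K) := by
  classical
  letI : Fintype G := Fintype.ofFinite G
  set π := QuotientGroup.mk' K with hπdef
  have hπone : ∀ g : G, π g = 1 ↔ g ∈ K := fun g => QuotientGroup.eq_one_iff g
  have key : ∀ X b : G, X ∈ N → X ∉ K → b ∈ N → ∀ s v : G, s ∈ T → v ∈ T →
      X * (s⁻¹ * X * s)⁻¹ = b⁻¹ * (v⁻¹ * b * v) → s⁻¹ * (b * X) * s = b * X :=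
    fun X b h1 h2 h3 s v hs hv heq =>
      Stmt9Proof.keyM N T K hNT hfree hbin h1 h2 h3 hs hv heq
  -- surjectivity of k ↦ k⁻¹ * k^s on K, for s ∈ T \ T₀
  have hψsurj : ∀ s, s ∈ T → s ∉ T₀ → ∀ c ∈ K, ∃ k ∈ K, k⁻¹ * (s⁻¹ * k * s) = c := by
    intro s hsT hsT₀ c hc
    set ψ : K → K := fun k =>
      ⟨(k : G)⁻¹ * (s⁻¹ * k * s), mul_mem (inv_mem k.2) (by
        have := Subgroup.Normal.conj_mem (inferInstance : K.Normal) (k : G) k.2 s⁻¹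
        simpa using this)⟩ with hψ
    have hinj : Function.Injective ψ := by
      intro k l h
      have hG : (k : G)⁻¹ * (s⁻¹ * k * s) = (l : G)⁻¹ * (s⁻¹ * l * s) :=
        congrArg Subtype.val h
      have hd : s⁻¹ * ((l : G) * (k : G)⁻¹) * s = (l : G) * (k : G)⁻¹ := by
        have expand : s⁻¹ * ((l : G) * (k : G)⁻¹) * s
            = ((l : G) * ((l : G)⁻¹ * (s⁻¹ * (l : G) * s))) *
              (((k : G)⁻¹ * (s⁻¹ * (k : G) * s))⁻¹ * (k : G)⁻¹) := by group
        rw [expand, ← hG]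
        group
      by_cases hdd : (l : G) * (k : G)⁻¹ = 1
      · exact (Subtype.ext (mul_inv_eq_one.mp hdd)).symm
      · exact absurd (hfix s hsT _ (mul_mem l.2 (inv_mem k.2)) hdd hd) hsT₀
    have hsurj := (Finite.injective_iff_surjective).mp hinj
    obtain ⟨k, hk⟩ := hsurj ⟨c, hc⟩
    exact ⟨(k : G), k.2, congrArg Subtype.val hk⟩
  -- finsets
  set Nbar : Subgroup (G ⧸ K) := N.map π with hNbar
  have hNbarNormal : Nbar.Normal :=
    Subgroup.Normal.map (inferInstance : N.Normal) π (QuotientGroup.mk'_surjective K)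
  set DF : Finset (G ⧸ K) := (Nbar : Set (G ⧸ K)).toFinset.erase 1 with hDF
  have hDFcard : DF.card = K.relIndex N - 1 := by
    rw [hDF, Finset.card_erase_of_mem (by simp [Set.mem_toFinset])]
    rw [Set.toFinset_card]
    rw [← Nat.card_eq_fintype_card]
    rw [show Nat.card (Nbar : Set (G ⧸ K)) = Nat.card Nbar from rfl]
    rw [hNbar, Stmt9Proof.card_nbar N K hKN]
  have hDFmem : ∀ q ∈ DF, q ∈ Nbar ∧ q ≠ 1 := by
    intro q hq
    rw [hDF, Finset.mem_erase, Set.mem_toFinset] at hq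
    exact ⟨hq.2, hq.1⟩
  have hrep : ∀ q ∈ DF, ∃ x : G, x ∈ N ∧ x ∉ K ∧ π x = q := by
    intro q hq
    obtain ⟨hqN, hq1⟩ := hDFmem q hq
    obtain ⟨x, hxN, hπx⟩ := Subgroup.mem_map.mp hqN
    exact ⟨x, hxN, fun hxK => hq1 (hπx ▸ (hπone x).mpr hxK), hπx⟩
  constructor
  · -- Part 1 : T₀ = T
    by_contra hne
    have hltT : T₀ < T := hT₀T.lt_of_ne hne
    obtain ⟨v₀, hv₀T, hv₀⟩ := SetLike.exists_of_lt hltT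
    -- (C1): no nontrivial element of T fixes any nontrivial coset of K in N
    have hC1 : ∀ s, s ∈ T → s ≠ 1 → ∀ a, a ∈ N → a ∉ K →
        a⁻¹ * (s⁻¹ * a * s) ∉ K := by
      intro s hsT hs1 a haN haK hmem
      obtain ⟨k, hkK, hk⟩ := hψsurj v₀ hv₀T hv₀ _ hmem
      have heq : a⁻¹ * (s⁻¹ * a⁻¹ * s)⁻¹ = k⁻¹ * (v₀⁻¹ * k * v₀) := by
        rw [hk]; group
      have hconc := key a⁻¹ k (inv_mem haN)
        (fun h => haK (by simpa using inv_mem h)) (hKN hkK) s v₀ hsT hv₀T heq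
      have hmemN : k * a⁻¹ ∈ N := mul_mem (hKN hkK) (inv_mem haN)
      have hmemK : k * a⁻¹ ∉ K := by
        intro h
        apply haK
        have h2 : k⁻¹ * (k * a⁻¹) ∈ K := mul_mem (inv_mem hkK) h
        rw [show k⁻¹ * (k * a⁻¹) = a⁻¹ by group] at h2
        simpa using inv_mem h2
      exact hfree s hsT hs1 _ hmemN hmemK hconc
    have hC1bar : ∀ s, s ∈ T → s ≠ 1 → ∀ q, q ∈ Nbar → q ≠ 1 →
        (π s)⁻¹ * q * (π s) ≠ q := by
      intro s hsT hs1 q hqN hq1 hcontra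
      obtain ⟨a, haN, hπa⟩ := Subgroup.mem_map.mp hqN
      have haK : a ∉ K := fun h => hq1 (hπa ▸ (hπone a).mpr h)
      have hKmem : a⁻¹ * (s⁻¹ * a * s) ∈ K := by
        apply (hπone _).mp
        have hexp : π (a⁻¹ * (s⁻¹ * a * s))
            = (π a)⁻¹ * ((π s)⁻¹ * (π a) * (π s)) := by
          simp only [map_mul, map_inv]
        rw [hexp, hπa, hcontra]
        group
      exact hC1 s hsT hs1 a haN haK hKmem
    -- pigeonhole setup
    set SF : Finset G := (T : Set G).toFinset \ (T₀ : Set G).toFinset with hSF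
    have hSFmem : ∀ s ∈ SF, s ∈ T ∧ s ∉ T₀ := by
      intro s hs
      rw [hSF, Finset.mem_sdiff, Set.mem_toFinset, Set.mem_toFinset] at hs
      exact hs
    have hSFcard : 2 ≤ SF.card := by
      have hsub : (T₀ : Set G).toFinset ⊆ (T : Set G).toFinset := by
        intro x hx
        rw [Set.mem_toFinset] at *
        exact hT₀T hx
      rw [hSF, Finset.card_sdiff_of_subset hsub]
      have hc1 : (T₀ : Set G).toFinset.card = Nat.card T₀ := by
        rw [Set.toFinset_card, ← Nat.card_eq_fintype_card]; rfl
      have hc2 : (T : Set G).toFinset.card = Nat.card T := by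
        rw [Set.toFinset_card, ← Nat.card_eq_fintype_card]; rfl
      rw [hc1, hc2]
      have hdvd := Subgroup.card_dvd_of_le hT₀T
      have hlt : Nat.card T₀ < Nat.card T := by
        rcases lt_or_ge (Nat.card T₀) (Nat.card T) with h | h
        · exact h
        · exfalso
          apply hne
          apply SetLike.coe_injective
          apply Set.eq_of_subset_of_ncard_le (fun x hx => hT₀T hx)
          rw [← Nat.card_coe_set_eq, ← Nat.card_coe_set_eq]
          exact h
      obtain ⟨j, hj⟩ := hdvd
      have hT₀pos : 0 < Nat.card T₀ := by omega
      have hj2 : 2 ≤ j := by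
        rcases j with _ | _ | j
        · omega
        · omega
        · omega
      have : Nat.card T₀ * 2 ≤ Nat.card T := by
        rw [hj]; exact Nat.mul_le_mul_left _ hj2
      omega
    have hDFpos : 0 < DF.card := by rw [hDFcard]; omega
    have hmaps : ∀ x ∈ DF ×ˢ SF,
        (fun y : (G ⧸ K) × G => y.1⁻¹ * ((π y.2)⁻¹ * y.1 * (π y.2))) x ∈ DF := by
      rintro ⟨q, s⟩ hx
      rw [Finset.mem_product] at hx
      obtain ⟨hqN, hq1⟩ := hDFmem q hx.1
      obtain ⟨hsT, hsT₀⟩ := hSFmem s hx.2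
      have hs1 : s ≠ 1 := fun h => hsT₀ (h ▸ one_mem T₀)
      have hconjN : (π s)⁻¹ * q * (π s) ∈ Nbar := by
        have := hNbarNormal.conj_mem q hqN (π s)⁻¹
        simpa using this
      rw [hDF, Finset.mem_erase, Set.mem_toFinset]
      constructor
      · intro h
        have h' : q⁻¹ * ((π s)⁻¹ * q * (π s)) = 1 := h
        have h2 := mul_eq_one_iff_inv_eq.mp h'
        exact hC1bar s hsT hs1 q hqN hq1 (by simpa using h2.symm)
      · exact mul_mem (inv_mem hqN) hconjN
    have hltcard : DF.card < (DF ×ˢ SF).card := by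
      rw [Finset.card_product]
      have := Nat.mul_lt_mul_of_pos_left (show 1 < SF.card by omega) hDFpos
      simpa using this
    obtain ⟨⟨q, s⟩, hmem1, ⟨p, v⟩, hmem2, hnepair, hfeq⟩ :=
      Finset.exists_ne_map_eq_of_card_lt_of_maps_to hltcard hmaps
    rw [Finset.mem_product] at hmem1 hmem2
    obtain ⟨hqDF, hsSF⟩ := hmem1
    obtain ⟨hpDF, hvSF⟩ := hmem2
    obtain ⟨hqN, hq1⟩ := hDFmem q hqDF
    obtain ⟨hpN, hp1⟩ := hDFmem p hpDF
    obtain ⟨hsT, hsT₀⟩ := hSFmem s hsSF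
    obtain ⟨hvT, hvT₀⟩ := hSFmem v hvSF
    have hs1 : s ≠ 1 := fun h => hsT₀ (h ▸ one_mem T₀)
    simp only at hfeq
    rcases eq_or_ne q p with hqp | hqp
    · -- same coset: then s = v, contradicting distinctness of the pairs
      subst hqp
      have hmid : (π s)⁻¹ * q * (π s) = (π v)⁻¹ * q * (π v) :=
        mul_left_cancel hfeq
      have hsv : s = v := by
        by_contra hsv
        have hrT : s * v⁻¹ ∈ T := mul_mem hsT (inv_mem hvT)
        have hr1 : s * v⁻¹ ≠ 1 := fun h => hsv (mul_inv_eq_one.mp h)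
        apply hC1bar (s * v⁻¹) hrT hr1 q hqN hq1
        have hπr : π (s * v⁻¹) = π s * (π v)⁻¹ := by
          simp [map_mul, map_inv]
        rw [hπr]
        have hexp : (π s * (π v)⁻¹)⁻¹ * q * (π s * (π v)⁻¹)
            = π v * ((π s)⁻¹ * q * (π s)) * (π v)⁻¹ := by group
        rw [hexp, hmid]
        group
      exact hnepair (by rw [hsv])
    · -- different cosets: lift and contradict via keyM
      obtain ⟨x, hxN, hπx⟩ := Subgroup.mem_map.mp hqN
      obtain ⟨z, hzN, hπz⟩ := Subgroup.mem_map.mp hpN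
      have hxK : x ∉ K := fun h => hq1 (hπx ▸ (hπone x).mpr h)
      set c : G := x * (z⁻¹ * (v⁻¹ * z * v)) * (s⁻¹ * x * s)⁻¹ with hc
      have hcK : c ∈ K := by
        apply (hπone c).mp
        have hexp : π c = π x * ((π z)⁻¹ * ((π v)⁻¹ * π z * π v)) *
            ((π s)⁻¹ * π x * (π s))⁻¹ := by
          simp only [hc, map_mul, map_inv]
        rw [hexp, hπx, hπz, ← hfeq]
        group
      obtain ⟨k, hkK, hk⟩ := hψsurj s hsT hsT₀ c hcK
      set a : G := k * x with ha
      have haN : a ∈ N := mul_mem (hKN hkK) hxN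
      have haK : a ∉ K := by
        intro h
        apply hxK
        have h2 : k⁻¹ * a ∈ K := mul_mem (inv_mem hkK) h
        rw [ha, show k⁻¹ * (k * x) = x by group] at h2
        exact h2
      have heq : a⁻¹ * (s⁻¹ * a⁻¹ * s)⁻¹ = z⁻¹ * (v⁻¹ * z * v) := by
        have hstep : a⁻¹ * (s⁻¹ * a⁻¹ * s)⁻¹
            = x⁻¹ * (k⁻¹ * (s⁻¹ * k * s)) * (s⁻¹ * x * s) := by
          rw [ha]; group
        rw [hstep, hk, hc]; group
      have hconc := key a⁻¹ z (inv_mem haN)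
        (fun h => haK (by simpa using inv_mem h)) hzN s v hsT hvT heq
      have hmemN : z * a⁻¹ ∈ N := mul_mem hzN (inv_mem haN)
      have hmemK : z * a⁻¹ ∉ K := by
        intro h
        apply hqp
        have hπa : π a = q := by
          rw [ha, map_mul, (hπone k).mpr hkK, one_mul, hπx]
        have : π (z * a⁻¹) = 1 := (hπone _).mpr h
        rw [map_mul, map_inv, hπa, hπz] at this
        have := mul_inv_eq_one.mp this
        exact this.symm
      exact hfree s hsT hs1 _ hmemN hmemK hconc
  · -- Part 2 : the bound on |T|
    intro hm
    set F : G ⧸ K → Finset G := fun q =>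
      if h : ∃ x : G, x ∈ N ∧ x ∉ K ∧ π x = q then
        ((T : Set G).toFinset.erase 1).image
          (fun s => (h.choose)⁻¹ * (s⁻¹ * h.choose * s))
      else ∅ with hF
    have hFval : ∀ q (h : ∃ x : G, x ∈ N ∧ x ∉ K ∧ π x = q),
        F q = ((T : Set G).toFinset.erase 1).image
          (fun s => (h.choose)⁻¹ * (s⁻¹ * h.choose * s)) := by
      intro q h
      rw [hF]
      exact dif_pos h
    have hTFcard : ((T : Set G).toFinset.erase 1).card = Nat.card T - 1 := by
      rw [Finset.card_erase_of_mem (by rw [Set.mem_toFinset]; exact one_mem T)]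
      rw [Set.toFinset_card, ← Nat.card_eq_fintype_card]
      rfl
    -- each F q has card |T| - 1
    have hFcard : ∀ q ∈ DF, (F q).card = Nat.card T - 1 := by
      intro q hq
      have h := hrep q hq
      obtain ⟨hxN, hxK, hπx⟩ := h.choose_spec
      rw [hFval q h]
      rw [Finset.card_image_of_injOn, hTFcard]
      intro s hs' t ht' hst
      have hs : s ∈ T ∧ s ≠ 1 := by simpa using hs'
      have ht : t ∈ T ∧ t ≠ 1 := by simpa using ht'
      by_contra hne
      have hrT : t * s⁻¹ ∈ T := mul_mem ht.1 (inv_mem hs.1)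
      have hr1 : t * s⁻¹ ≠ 1 := fun hh => hne (mul_inv_eq_one.mp hh).symm
      apply hfree (t * s⁻¹) hrT hr1 h.choose hxN hxK
      have hmid : s⁻¹ * h.choose * s = t⁻¹ * h.choose * t := mul_left_cancel hst
      have hexp : (t * s⁻¹)⁻¹ * h.choose * (t * s⁻¹)
          = s * (t⁻¹ * h.choose * t) * s⁻¹ := by group
      rw [hexp, ← hmid]; group
    have hFsub : ∀ q ∈ DF, F q ⊆ (N : Set G).toFinset.erase 1 := by
      intro q hq w hw
      have h := hrep q hq
      obtain ⟨hxN, hxK, hπx⟩ := h.choose_spec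
      rw [hFval q h, Finset.mem_image] at hw
      obtain ⟨s, hs, rfl⟩ := hw
      rw [Finset.mem_erase, Set.mem_toFinset] at hs
      rw [Finset.mem_erase, Set.mem_toFinset]
      constructor
      · intro hcon
        apply hfree s hs.2 hs.1 h.choose hxN hxK
        have h2 := mul_eq_one_iff_inv_eq.mp hcon
        simpa using h2.symm
      · exact mul_mem (inv_mem hxN) (by
          have := Subgroup.Normal.conj_mem (inferInstance : N.Normal) h.choose hxN s⁻¹
          simpa using this)
    have hFdisj : ∀ q ∈ DF, ∀ p ∈ DF, q ≠ p → Disjoint (F q) (F p) := by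
      intro q hq p hp hqp
      rw [Finset.disjoint_left]
      intro w hwq hwp
      have h1 := hrep q hq
      have h2 := hrep p hp
      obtain ⟨hxN, hxK, hπx⟩ := h1.choose_spec
      obtain ⟨hzN, hzK, hπz⟩ := h2.choose_spec
      set x := h1.choose
      set z := h2.choose
      rw [hFval q h1, Finset.mem_image] at hwq
      rw [hFval p h2, Finset.mem_image] at hwp
      obtain ⟨s, hs, hws⟩ := hwq
      obtain ⟨v, hv, hwv⟩ := hwp
      rw [Finset.mem_erase, Set.mem_toFinset] at hs hv
      have heq : x⁻¹ * (s⁻¹ * x⁻¹ * s)⁻¹ = z⁻¹ * (v⁻¹ * z * v) := by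
        rw [show x⁻¹ * (s⁻¹ * x⁻¹ * s)⁻¹ = x⁻¹ * (s⁻¹ * x * s) by group]
        rw [hws, ← hwv]
      have hconc := key x⁻¹ z (inv_mem hxN)
        (fun h => hxK (by simpa using inv_mem h)) hzN s v hs.2 hv.2 heq
      have hmemN : z * x⁻¹ ∈ N := mul_mem hzN (inv_mem hxN)
      have hmemK : z * x⁻¹ ∉ K := by
        intro h
        apply hqp
        have : π (z * x⁻¹) = 1 := (hπone _).mpr h
        rw [map_mul, map_inv, hπx, hπz] at this
        exact (mul_inv_eq_one.mp this).symm
      exact hfree s hs.2 hs.1 _ hmemN hmemK hconc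
    -- counting
    have hcup : (DF.biUnion F).card = ∑ q ∈ DF, (F q).card :=
      Finset.card_biUnion hFdisj
    have hsum : ∑ q ∈ DF, (F q).card = DF.card * (Nat.card T - 1) := by
      rw [Finset.sum_congr rfl hFcard, Finset.sum_const, smul_eq_mul]
    have hsubU : DF.biUnion F ⊆ (N : Set G).toFinset.erase 1 :=
      Finset.biUnion_subset.mpr hFsub
    have hNcard : ((N : Set G).toFinset.erase 1).card = Nat.card N - 1 := by
      rw [Finset.card_erase_of_mem (by rw [Set.mem_toFinset]; exact one_mem N)]
      rw [Set.toFinset_card, ← Nat.card_eq_fintype_card]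
      rfl
    have hmain : (K.relIndex N - 1) * (Nat.card T - 1) ≤ Nat.card N - 1 := by
      rw [← hDFcard, ← hsum, ← hcup, ← hNcard]
      exact Finset.card_le_card hsubU
    -- arithmetic
    have hNval : Nat.card N = Nat.card K * K.relIndex N := Stmt9Proof.card_N_eq N K hKN
    have hKpos : 0 < Nat.card K := Nat.card_pos
    rw [hNval] at hmain
    have harith : ∀ m k t : ℕ, 3 ≤ m → 1 ≤ k →
        (m - 1) * (t - 1) ≤ k * m - 1 → t ≤ 1 + 2 * k := by
      intro m k t h3 hk hmain
      rcases Nat.eq_zero_or_pos t with ht | ht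
      · omega
      obtain ⟨m', rfl⟩ : ∃ m', m = m' + 3 := ⟨m - 3, by omega⟩
      obtain ⟨t', rfl⟩ : ∃ t', t = t' + 1 := ⟨t - 1, by omega⟩
      obtain ⟨k', rfl⟩ : ∃ k', k = k' + 1 := ⟨k - 1, by omega⟩
      have e1 : m' + 3 - 1 = m' + 2 := by omega
      have e2 : t' + 1 - 1 = t' := by omega
      rw [e1, e2] at hmain
      have h0 : 0 < (k' + 1) * (m' + 3) := by positivity
      have hmain2 := (Nat.le_sub_iff_add_le h0).mp hmain
      by_contra hcon
      push_neg at hcon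
      have ht' : 2 * k' + 3 ≤ t' := by omega
      have h2 : (m' + 2) * (2 * k' + 3) ≤ (m' + 2) * t' := Nat.mul_le_mul_left _ ht'
      nlinarith [h2, hmain2]
    exact harith _ _ _ hm hKpos hmain
end

section
/- Let p be an odd prime, let F be a finite field of cardinality q = p^f, and let G = PSL₂(F). Let H be a subgroup of G of odd order such that p divides |H| and |H| is not a power of p. Then the action of G on the set of right cosets of H by right multiplication is not binary. -/
open scoped Pointwise MatrixGroups

section Aux


open Matrix

/-- Cayley–Hamilton for 2×2 matrices. -/
lemma stmt12_ch2 {F : Type*} [CommRing F] (A : Matrix (Fin 2) (Fin 2) F) :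
    A * A = A.trace • A - A.det • (1 : Matrix (Fin 2) (Fin 2) F) := by
  ext i j
  fin_cases i <;> fin_cases j <;>
    simp [Matrix.mul_apply, Fin.sum_univ_two, Matrix.trace_fin_two, Matrix.det_fin_two,
      Matrix.one_apply] <;> ring

lemma stmt12_sq_neg_one {F : Type*} [CommRing F] (A : Matrix (Fin 2) (Fin 2) F)
    (hdet : A.det = 1) (htr : A.trace = 0) : A * A = -1 := by
  rw [stmt12_ch2, hdet, htr]; simp

lemma stmt12_nilp {F : Type*} [Field F] (X : Matrix (Fin 2) (Fin 2) F) (n : ℕ)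
    (hn : X ^ n = 0) (hX : X ≠ 0) : X.trace = 0 ∧ X.det = 0 := by
  have hn0 : n ≠ 0 := by
    rintro rfl
    rw [pow_zero] at hn
    exact one_ne_zero hn
  have hdet : X.det = 0 := by
    have h1 : X.det ^ n = 0 := by rw [← Matrix.det_pow, hn]; simp
    exact pow_eq_zero_iff hn0 |>.mp h1
  have hsq : X * X = X.trace • X := by rw [stmt12_ch2, hdet]; simp
  have hpow : ∀ k : ℕ, X ^ (k + 1) = X.trace ^ k • X := by
    intro k
    induction k with
    | zero => simp
    | succ m ih =>
      rw [pow_succ, ih, smul_mul_assoc, hsq, smul_smul, pow_succ]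
  have htr : X.trace = 0 := by
    rcases n with _ | m
    · exact absurd rfl hn0
    rcases m with _ | m'
    · rw [pow_one] at hn; exact absurd hn hX
    have h3 := hpow (m' + 1)
    rw [hn] at h3
    have h2 : X.trace ^ (m' + 1) = 0 := by
      by_contra hne
      exact hX (by rw [eq_comm, smul_eq_zero_iff_right hne] at h3; exact h3)
    exact pow_eq_zero_iff (Nat.succ_ne_zero m') |>.mp h2
  exact ⟨htr, hdet⟩

lemma stmt12_key_g {F : Type*} [Field F] (X : Matrix (Fin 2) (Fin 2) F)
    (htr : X.trace = 0) (hdet : X.det = 0) (hX : X ≠ 0) :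
    ∃ g gi : Matrix (Fin 2) (Fin 2) F, g.det = 1 ∧ g * gi = 1 ∧
      (g * ((1 + X) * (1 + X)) * gi * (1 + X)).trace = 0 := by
  set b := X 0 0 with hb
  set c := X 0 1 with hc
  set d := X 1 0 with hd
  have hX11 : X 1 1 = -b := by
    have h := htr
    rw [Matrix.trace_fin_two] at h
    linear_combination h
  have hXeq : X = !![b, c; d, -b] := by
    rw [Matrix.eta_fin_two X, hX11]
  have h1X : (1 : Matrix (Fin 2) (Fin 2) F) + X = !![1 + b, c; d, 1 - b] := by
    rw [hXeq, Matrix.one_fin_two]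
    ext i j
    fin_cases i <;> fin_cases j <;> simp <;> ring
  have hrel : b * b + c * d = 0 := by
    rw [hXeq] at hdet
    rw [Matrix.det_fin_two_of] at hdet
    linear_combination -hdet
  by_cases hcz : c = 0
  · have hbz : b = 0 := by
      have h : b * b = 0 := by rw [hcz] at hrel; linear_combination hrel
      exact mul_self_eq_zero.mp h
    have hdz : d ≠ 0 := by
      intro hdz
      apply hX
      rw [hXeq, hbz, hcz, hdz]
      ext i j; fin_cases i <;> fin_cases j <;> simp
    refine ⟨!![1, d⁻¹; 0, 1], !![1, -d⁻¹; 0, 1], ?_, ?_, ?_⟩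
    · simp [Matrix.det_fin_two_of]
    · rw [Matrix.mul_fin_two, Matrix.one_fin_two]; congr 1 <;> ring
    · rw [h1X, hbz, hcz]
      simp only [add_zero, sub_zero]
      simp only [Matrix.mul_fin_two, Matrix.trace_fin_two_of]
      field_simp
      ring
  · refine ⟨!![1, 0; c⁻¹, 1], !![1, 0; -c⁻¹, 1], ?_, ?_, ?_⟩
    · simp [Matrix.det_fin_two_of]
    · rw [Matrix.mul_fin_two, Matrix.one_fin_two]; congr 1 <;> ring
    · rw [h1X]
      simp only [Matrix.mul_fin_two, Matrix.trace_fin_two_of]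
      field_simp
      linear_combination (6 * c) * hrel

end Aux

lemma stmt12_final {G : Type*} [Group G] (H : Subgroup G) (hHodd : Odd (Nat.card H))
    (x w τ : G) (hwH : w ∈ H) (hτeq : τ = x * (w * w) * x⁻¹ * w)
    (hτ2 : τ * τ = 1) (hτne : τ ≠ 1)
    (hbin : IsBinaryCosetAction H) : False := by
  have hkey : (x * (w * w) * x⁻¹) * w * (x * (w * w) * x⁻¹) = w⁻¹ := by
    have h := hτ2
    rw [hτeq] at h
    have h2 : (x * (w * w) * x⁻¹ * w * (x * (w * w) * x⁻¹)) * w = 1 := by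
      rw [← h]; simp only [mul_assoc]
    exact eq_inv_of_mul_eq_one_left h2
  have hmkeq : ∀ a b : G, b * a⁻¹ ∈ H →
      (Quotient.mk (QuotientGroup.rightRel H) a = Quotient.mk (QuotientGroup.rightRel H) b) :=
    fun a b hab => Quotient.sound (QuotientGroup.rightRel_apply.mpr hab)
  have hmkeq' : ∀ a b : G,
      (Quotient.mk (QuotientGroup.rightRel H) a = Quotient.mk (QuotientGroup.rightRel H) b) →
      b * a⁻¹ ∈ H :=
    fun a b h => QuotientGroup.rightRel_apply.mp (Quotient.exact h)
  have hmk : ∀ gg a : G,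
      rightCosetMul H gg (Quotient.mk (QuotientGroup.rightRel H) a)
        = Quotient.mk (QuotientGroup.rightRel H) (a * gg) := fun gg a => rfl
  set s : G := x⁻¹ * w * x * (w * w) with hs
  have P1 : rightCosetMul H (w * w) (Quotient.mk (QuotientGroup.rightRel H) x)
      = Quotient.mk (QuotientGroup.rightRel H) (x * (w * w)) := by rw [hmk]
  have P2 : rightCosetMul H (w * w) (Quotient.mk (QuotientGroup.rightRel H) 1)
      = Quotient.mk (QuotientGroup.rightRel H) 1 := by
    rw [hmk]
    apply hmkeq
    have h : (1 : G) * (1 * (w * w))⁻¹ = (w * w)⁻¹ := by simp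
    rw [h]
    exact H.inv_mem (H.mul_mem hwH hwH)
  have P3 : rightCosetMul H (w * w)⁻¹ (Quotient.mk (QuotientGroup.rightRel H) (x * (w * w)))
      = Quotient.mk (QuotientGroup.rightRel H) x := by
    rw [hmk]
    apply hmkeq
    have h : x * (x * (w * w) * (w * w)⁻¹)⁻¹ = 1 := by simp [mul_assoc]
    rw [h]
    exact H.one_mem
  have P4 : rightCosetMul H (w * w)⁻¹ (Quotient.mk (QuotientGroup.rightRel H) 1)
      = Quotient.mk (QuotientGroup.rightRel H) 1 := by
    rw [hmk]
    apply hmkeq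
    have h : (1 : G) * (1 * (w * w)⁻¹)⁻¹ = w * w := by simp
    rw [h]
    exact H.mul_mem hwH hwH
  have P5 : rightCosetMul H s (Quotient.mk (QuotientGroup.rightRel H) x)
      = Quotient.mk (QuotientGroup.rightRel H) (x * (w * w)) := by
    rw [hmk]
    apply hmkeq
    have h : (x * (w * w)) * (x * s)⁻¹ = w⁻¹ := by
      rw [hs]
      simp [mul_assoc, mul_inv_rev]
    rw [h]
    exact H.inv_mem hwH
  have P6 : rightCosetMul H s (Quotient.mk (QuotientGroup.rightRel H) (x * (w * w)))
      = Quotient.mk (QuotientGroup.rightRel H) x := by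
    rw [hmk]
    apply hmkeq
    have heq : x * (x * (w * w) * s)⁻¹
        = ((x * (w * w) * x⁻¹) * w * (x * (w * w) * x⁻¹))⁻¹ := by
      rw [hs]
      simp [mul_assoc, mul_inv_rev]
    rw [heq, hkey, inv_inv]
    exact hwH
  obtain ⟨ρ, hρ⟩ := hbin 3
    ![Quotient.mk (QuotientGroup.rightRel H) x,
      Quotient.mk (QuotientGroup.rightRel H) (x * (w * w)),
      Quotient.mk (QuotientGroup.rightRel H) 1]
    ![Quotient.mk (QuotientGroup.rightRel H) (x * (w * w)),
      Quotient.mk (QuotientGroup.rightRel H) x,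
      Quotient.mk (QuotientGroup.rightRel H) 1] (by
    intro i j
    fin_cases i <;> fin_cases j <;>
      first
        | exact ⟨w * w, P1, P1⟩
        | exact ⟨s, P5, P6⟩
        | exact ⟨w * w, P1, P2⟩
        | exact ⟨s, P6, P5⟩
        | exact ⟨(w * w)⁻¹, P3, P3⟩
        | exact ⟨(w * w)⁻¹, P3, P4⟩
        | exact ⟨w * w, P2, P1⟩
        | exact ⟨(w * w)⁻¹, P4, P3⟩
        | exact ⟨w * w, P2, P2⟩)
  have h0 : rightCosetMul H ρ (Quotient.mk (QuotientGroup.rightRel H) x)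
      = Quotient.mk (QuotientGroup.rightRel H) (x * (w * w)) := hρ 0
  have h1 : rightCosetMul H ρ (Quotient.mk (QuotientGroup.rightRel H) (x * (w * w)))
      = Quotient.mk (QuotientGroup.rightRel H) x := hρ 1
  have h2 : rightCosetMul H ρ (Quotient.mk (QuotientGroup.rightRel H) 1)
      = Quotient.mk (QuotientGroup.rightRel H) 1 := hρ 2
  rw [hmk] at h0 h1 h2
  have hρH : ρ ∈ H := by
    have h := hmkeq' _ _ h2
    have heq : (1 : G) * (1 * ρ)⁻¹ = ρ⁻¹ := by simp
    rw [heq] at h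
    exact (H.inv_mem_iff).mp h
  have hm1 : (x * (w * w)) * (x * ρ)⁻¹ ∈ H := hmkeq' _ _ h0
  have hm2 : x * ((x * (w * w)) * ρ)⁻¹ ∈ H := hmkeq' _ _ h1
  have hmC : x * (ρ * ρ) * x⁻¹ ∈ H := by
    have h := H.mul_mem (H.inv_mem hm1) (H.inv_mem hm2)
    have heq : ((x * (w * w)) * (x * ρ)⁻¹)⁻¹ * (x * ((x * (w * w)) * ρ)⁻¹)⁻¹
        = x * (ρ * ρ) * x⁻¹ := by
      simp [mul_assoc, mul_inv_rev]
    rwa [heq] at h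
  have hρodd : Odd (orderOf ρ) := by
    have hdvd : orderOf ρ ∣ Nat.card H := by
      rw [← Subgroup.orderOf_mk ρ hρH]
      exact orderOf_dvd_natCard _
    rcases Nat.even_or_odd (orderOf ρ) with he | ho
    · exfalso
      have h2d : 2 ∣ Nat.card H := dvd_trans he.two_dvd hdvd
      rw [Nat.odd_iff] at hHodd
      omega
    · exact ho
  obtain ⟨k, hk⟩ := hρodd
  have hρpow : ρ ^ (2 * k + 2) = ρ := by
    have h : 2 * k + 2 = orderOf ρ + 1 := by omega
    rw [h, pow_succ, pow_orderOf_eq_one, one_mul]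
  have hmD : x * ρ * x⁻¹ ∈ H := by
    have h := H.pow_mem hmC (k + 1)
    have heq : (x * (ρ * ρ) * x⁻¹) ^ (k + 1) = x * ρ ^ (2 * k + 2) * x⁻¹ := by
      have h1' : x * (ρ * ρ) * x⁻¹ = x * ρ ^ 2 * x⁻¹ := by rw [pow_two]
      rw [h1', conj_pow, ← pow_mul]
      have h2' : 2 * (k + 1) = 2 * k + 2 := by omega
      rw [h2']
    rw [heq, hρpow] at h
    exact h
  have hmY : x * (w * w) * x⁻¹ ∈ H := by
    have h := H.mul_mem (H.inv_mem hm2) (H.inv_mem hmD)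
    have heq : (x * ((x * (w * w)) * ρ)⁻¹)⁻¹ * (x * ρ * x⁻¹)⁻¹ = x * (w * w) * x⁻¹ := by
      simp [mul_assoc, mul_inv_rev]
    rwa [heq] at h
  have hτH : τ ∈ H := by
    rw [hτeq]
    exact H.mul_mem hmY hwH
  have hτord : orderOf τ = 2 := by
    refine orderOf_eq_prime ?_ hτne
    rw [pow_two]
    exact hτ2
  have h2dvd : 2 ∣ Nat.card H := by
    have hd : orderOf (⟨τ, hτH⟩ : H) ∣ Nat.card H := orderOf_dvd_natCard _
    rwa [Subgroup.orderOf_mk, hτord] at hd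
  rw [Nat.odd_iff] at hHodd
  omega

theorem stmt12 {p f : ℕ} (hp : p.Prime) (hpodd : Odd p)
    {F : Type*} [Field F] [Fintype F] (hF : Fintype.card F = p ^ f)
    (H : Subgroup (Matrix.ProjectiveSpecialLinearGroup (Fin 2) F))
    (hHodd : Odd (Nat.card H)) (hpH : p ∣ Nat.card H)
    (hnotp : ∀ k : ℕ, Nat.card H ≠ p ^ k) :
    ¬ IsBinaryCosetAction H := by
  classical
  intro hbin
  haveI hpfact : Fact p.Prime := ⟨hp⟩
  -- characteristic of F is p
  haveI hchar : CharP F p := by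
    obtain ⟨n, hlp, hcard⟩ := FiniteField.card F (ringChar F)
    have hf : f ≠ 0 := by
      intro h
      rw [h, pow_zero] at hF
      exact absurd hF Fintype.one_lt_card.ne'
    have hdvd : p ∣ (ringChar F) ^ (n : ℕ) := by
      rw [← hcard, hF]; exact dvd_pow_self p hf
    have hpl : p = ringChar F :=
      (Nat.prime_dvd_prime_iff_eq hp hlp).mp (hp.dvd_of_dvd_pow hdvd)
    rw [hpl]; exact ringChar.charP F
  have h2F : (2 : F) ≠ 0 := by
    intro h
    have h2 : p ∣ 2 := (CharP.cast_eq_zero_iff F p 2).mp (by exact_mod_cast h)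
    have hp2 : p = 2 := (Nat.prime_dvd_prime_iff_eq hp Nat.prime_two).mp h2
    rw [hp2, Nat.odd_iff] at hpodd
    omega
  -- elements of order p in H
  have hcardpos : 0 < Nat.card H := by
    rcases Nat.eq_zero_or_pos (Nat.card H) with h | h
    · rw [h] at hHodd; norm_num at hHodd
    · exact h
  haveI hHfin : Finite H := (Nat.card_pos_iff.mp hcardpos).2
  obtain ⟨u₀, hu₀⟩ := exists_prime_orderOf_dvd_card' (G := H) p hpH
  set SL := Matrix.SpecialLinearGroup (Fin 2) F with hSL
  set u : Matrix.ProjectiveSpecialLinearGroup (Fin 2) F := ((u₀ : H) : Matrix.ProjectiveSpecialLinearGroup (Fin 2) F) with hu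
  have hu_mem : u ∈ H := u₀.2
  have huord : orderOf u = p := by rw [hu, Subgroup.orderOf_coe]; exact hu₀
  have hup : u ^ p = 1 := by rw [← huord]; exact pow_orderOf_eq_one u
  have hu2 : u * u ≠ 1 := by
    intro h
    have hdvd : orderOf u ∣ 2 := orderOf_dvd_of_pow_eq_one (by rw [pow_two]; exact h)
    rw [huord] at hdvd
    have hp2 : p = 2 := (Nat.prime_dvd_prime_iff_eq hp Nat.prime_two).mp hdvd
    rw [hp2, Nat.odd_iff] at hpodd
    omega
  -- lift to SL2
  set π : SL →* Matrix.ProjectiveSpecialLinearGroup (Fin 2) F :=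
    QuotientGroup.mk' (Subgroup.center SL) with hπ
  obtain ⟨V, hV⟩ := QuotientGroup.mk'_surjective (Subgroup.center SL) u
  have hVpc : V ^ p ∈ Subgroup.center SL := by
    rw [← QuotientGroup.eq_one_iff]
    have : π (V ^ p) = 1 := by rw [map_pow, hV, hup]
    simpa [hπ] using this
  obtain ⟨r, hr2, hrs⟩ := Matrix.SpecialLinearGroup.mem_center_iff.mp hVpc
  set A : Matrix (Fin 2) (Fin 2) F := (V : Matrix (Fin 2) (Fin 2) F) with hA
  have hAp : A ^ p = Matrix.scalar (Fin 2) r := by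
    rw [hA, ← Matrix.SpecialLinearGroup.coe_pow, ← hrs]
  have hA2p : (A ^ 2) ^ p = 1 := by
    rw [← pow_mul, mul_comm 2 p, pow_mul, hAp, ← map_pow]
    have : r ^ 2 = 1 := by simpa using hr2
    rw [this, map_one]
  haveI : CharP (Matrix (Fin 2) (Fin 2) F) p := Matrix.charP p
  set X : Matrix (Fin 2) (Fin 2) F := A ^ 2 - 1 with hX
  have hXp : X ^ p = 0 := by
    rw [hX, sub_pow_char_of_commute p (Commute.one_right _), hA2p, one_pow, sub_self]
  by_cases hX0 : X = 0
  · -- then u² = 1, contradiction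
    have hA21 : A ^ 2 = 1 := by rwa [hX, sub_eq_zero] at hX0
    have hVV : V * V = 1 := by
      apply Subtype.ext
      have : ((V * V : SL) : Matrix (Fin 2) (Fin 2) F) = A * A :=
        Matrix.SpecialLinearGroup.coe_mul V V
      rw [this, ← pow_two, hA21]
      rfl
    exact hu2 (by rw [← hV, ← map_mul, hVV, map_one])
  obtain ⟨htrX, hdetX⟩ := stmt12_nilp X p hXp hX0
  obtain ⟨g, gi, hgdet, hggi, htrT⟩ := stmt12_key_g X htrX hdetX hX0
  have h1X : (1 : Matrix (Fin 2) (Fin 2) F) + X = A ^ 2 := by rw [hX, add_comm, sub_add_cancel]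
  rw [h1X] at htrT
  have hgidet : gi.det = 1 := by
    have h := congrArg Matrix.det hggi
    rw [Matrix.det_mul, hgdet, Matrix.det_one, one_mul] at h
    exact h
  set gS : SL := ⟨g, hgdet⟩ with hgS
  set giS : SL := ⟨gi, hgidet⟩ with hgiS
  have hginv : gS⁻¹ = giS := inv_eq_of_mul_eq_one_right (Subtype.ext hggi)
  set W : SL := V * V with hW
  have hWm : (W : Matrix (Fin 2) (Fin 2) F) = A ^ 2 := by
    rw [hW, pow_two]
    exact Matrix.SpecialLinearGroup.coe_mul V V
  set T : SL := gS * (W * W) * gS⁻¹ * W with hT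
  have hTval : (T : Matrix (Fin 2) (Fin 2) F) = g * (A ^ 2 * A ^ 2) * gi * A ^ 2 := by
    rw [hT, hginv, ← hWm]
    rfl
  have hTtr : Matrix.trace (T : Matrix (Fin 2) (Fin 2) F) = 0 := by
    rw [hTval]; exact htrT
  haveI : Fact (Even (Fintype.card (Fin 2))) := ⟨by simp⟩
  have hTT : T * T = -1 := by
    apply Subtype.ext
    rw [Matrix.SpecialLinearGroup.coe_mul,
      stmt12_sq_neg_one _ T.2 hTtr, Matrix.SpecialLinearGroup.coe_neg,
      Matrix.SpecialLinearGroup.coe_one]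
  set τ := π T with hτ
  have hτ2 : τ * τ = 1 := by
    rw [hτ, ← map_mul, hTT]
    have hc : (-1 : SL) ∈ Subgroup.center SL := by
      refine Matrix.SpecialLinearGroup.mem_center_iff.mpr ⟨-1, by norm_num, ?_⟩
      rw [map_neg, map_one, Matrix.SpecialLinearGroup.coe_neg,
        Matrix.SpecialLinearGroup.coe_one]
    simpa [hπ] using (QuotientGroup.eq_one_iff (-1 : SL)).mpr hc
  have hτne : τ ≠ 1 := by
    intro h
    have hTc : T ∈ Subgroup.center SL := by
      rw [← QuotientGroup.eq_one_iff]
      simpa [hπ, hτ] using h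
    obtain ⟨s, hs2, hss⟩ := Matrix.SpecialLinearGroup.mem_center_iff.mp hTc
    have h1 : Matrix.trace (Matrix.scalar (Fin 2) s) = 0 := by rw [hss]; exact hTtr
    have hs0 : s = 0 := by
      rw [Matrix.scalar_apply, Matrix.trace_fin_two] at h1
      simp at h1
      have h2 : (2 : F) * s = 0 := by linear_combination h1
      rcases mul_eq_zero.mp h2 with h | h
      · exact absurd h h2F
      · exact h
    have hdT : Matrix.det (T : Matrix (Fin 2) (Fin 2) F) = 1 := T.2
    rw [← hss, hs0] at hdT
    simp [Matrix.scalar_apply] at hdT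
  -- assemble the contradiction
  set x := π gS with hx
  set w := u * u with hw'
  have hwH : w ∈ H := H.mul_mem hu_mem hu_mem
  have hπW : π W = w := by
    rw [hW, map_mul, hπ, hV]
  have hτeq : τ = x * (w * w) * x⁻¹ * w := by
    rw [hτ, hT]
    simp only [map_mul, map_inv]
    rw [hπW, map_inv π gS]
  exact stmt12_final H hHodd x w τ hwH hτeq hτ2 hτne hbin
end

section
/- Let F be a finite field of characteristic different from 3, and let G = PSL₂(F). Then any two elements of order 3 in G are conjugate in G. -/
open Matrix Polynomial
open scoped Pointwise MatrixGroups

lemma normSurj (F : Type*) [Field F] [Fintype F] (h3 : ringChar F ≠ 3) (d : F) :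
    ∃ a b : F, a ^ 2 - a * b + b ^ 2 = d := by
  by_cases h2 : ringChar F = 2
  · have h2' : (2 : F) = 0 := by
      have := ringChar.Nat.cast_ringChar (R := F)
      rw [h2] at this; exact_mod_cast this
    have hinj : Function.Injective (fun x : F => x * x) := by
      intro u v huv
      simp only at huv
      have h0 : (u - v) * (u - v) = 0 := by linear_combination huv + (v*v - u*v) * h2'
      have := mul_self_eq_zero.mp h0
      exact sub_eq_zero.mp this
    obtain ⟨a, ha⟩ := Finite.injective_iff_surjective.mp hinj d
    have ha' : a * a = d := ha
    exact ⟨a, 0, by linear_combination ha'⟩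
  · have hodd := FiniteField.odd_card_of_char_ne_two h2
    have h3' : (3 : F) ≠ 0 := by
      intro h
      have hd := (CharP.cast_eq_zero_iff F (ringChar F) 3).mp (by exact_mod_cast h)
      rcases (Nat.dvd_prime (by norm_num)).mp hd with h1 | h1
      · exact CharP.ringChar_ne_one h1
      · exact h3 h1
    have hf : degree ((X : F[X]) ^ 2 - C d) = 2 := degree_X_pow_sub_C (by norm_num) d
    have hg : degree (C (3 : F) * X ^ 2) = 2 := by
      simpa using degree_C_mul_X_pow 2 h3'
    obtain ⟨u, w, huw⟩ := FiniteField.exists_root_sum_quadratic hf hg hodd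
    simp only [eval_add, eval_sub, eval_pow, eval_X, eval_C, eval_mul] at huw
    exact ⟨u + w, 2 * w, by linear_combination huw⟩

lemma keyConj {F : Type*} [Field F] [Fintype F] (h3 : ringChar F ≠ 3) (a b c d : F)
    (hdet : a * d - b * c = 1) (hcube : (!![a, b; c, d] : Matrix (Fin 2) (Fin 2) F) ^ 3 = 1)
    (hns : ¬(b = 0 ∧ c = 0 ∧ a = d)) :
    ∃ g : Matrix (Fin 2) (Fin 2) F, g.det = 1 ∧
      !![a, b; c, d] * g = g * !![0, -1; 1, -1] := by
  set M : Matrix (Fin 2) (Fin 2) F := !![a, b; c, d] with hM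
  have h2 : M ^ 2 = (a + d) • M - 1 := by
    ext i j
    fin_cases i <;> fin_cases j <;>
      simp [hM, pow_two, Matrix.mul_apply, Fin.sum_univ_two, Matrix.one_apply] <;>
      first | ring1 | linear_combination -hdet
  have h3' : M ^ 3 = ((a + d) ^ 2 - 1) • M - (a + d) • (1 : Matrix (Fin 2) (Fin 2) F) := by
    rw [pow_succ, h2, sub_mul, smul_mul_assoc, one_mul, ← pow_two, h2, smul_sub, smul_smul]
    module
  have hE : ((a + d) ^ 2 - 1) • M - (a + d) • (1 : Matrix (Fin 2) (Fin 2) F) = 1 :=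
    h3' ▸ hcube
  have E00 := congrFun (congrFun hE 0) 0
  have E01 := congrFun (congrFun hE 0) 1
  have E10 := congrFun (congrFun hE 1) 0
  have E11 := congrFun (congrFun hE 1) 1
  simp [hM, Matrix.one_apply] at E00 E01 E10 E11
  have htr : a + d = -1 := by
    by_cases ht : (a + d) ^ 2 - 1 = 0
    · have := E00
      rw [ht] at this
      linear_combination -this
    · exfalso
      apply hns
      have hb : b = 0 := E01.resolve_left ht
      have hc : c = 0 := E10.resolve_left ht
      refine ⟨hb, hc, ?_⟩
      have : ((a + d) ^ 2 - 1) * (a - d) = 0 := by linear_combination E00 - E11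
      rcases mul_eq_zero.mp this with h | h
      · exact absurd h ht
      · exact sub_eq_zero.mp h
  have hd : d = -1 - a := by linear_combination htr
  subst hd
  have hbc : b * c = -(a ^ 2 + a + 1) := by linear_combination -hdet
  have hstep : ∃ g0 : Matrix (Fin 2) (Fin 2) F, g0.det ≠ 0 ∧
      M * g0 = g0 * !![0, -1; 1, -1] := by
    by_cases hc : c ≠ 0
    · refine ⟨!![1, a; 0, c], by simp [Matrix.det_fin_two_of, hc], ?_⟩
      ext i j
      fin_cases i <;> fin_cases j <;>
        simp [hM, Matrix.mul_apply, Fin.sum_univ_two] <;>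
        first | ring1 | linear_combination hbc | linear_combination -hbc
    · push_neg at hc
      have ha : a ^ 2 + a + 1 = 0 := by linear_combination hbc - b * hc
      by_cases hb : b ≠ 0
      · refine ⟨!![0, b; 1, -1 - a], by simp [Matrix.det_fin_two_of, hb], ?_⟩
        ext i j
        fin_cases i <;> fin_cases j <;>
          simp [hM, hc, Matrix.mul_apply, Fin.sum_univ_two] <;>
          first | ring1 | linear_combination ha | linear_combination -ha
      · push_neg at hb
        have had : a ≠ -1 - a := fun h => hns ⟨hb, hc, h⟩
        refine ⟨!![1, a; 1, -1 - a], ?_, ?_⟩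
        · simp only [Matrix.det_fin_two_of]
          intro h
          apply had
          linear_combination -h
        · ext i j
          fin_cases i <;> fin_cases j <;>
            simp [hM, hb, hc, Matrix.mul_apply, Fin.sum_univ_two] <;>
            first | ring1 | linear_combination ha | linear_combination -ha
  obtain ⟨g0, hg0, hsemi⟩ := hstep
  obtain ⟨α, β, hαβ⟩ := normSurj F h3 (g0.det)⁻¹
  refine ⟨g0 * !![α, -β; β, α - β], ?_, ?_⟩
  · rw [Matrix.det_mul, Matrix.det_fin_two_of]
    have h : α * (α - β) - -β * β = (g0.det)⁻¹ := by linear_combination hαβ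
    rw [h]
    exact mul_inv_cancel₀ hg0
  · rw [← mul_assoc, hsemi, mul_assoc, mul_assoc]
    congr 1
    ext i j
    fin_cases i <;> fin_cases j <;>
      simp [Matrix.mul_apply, Fin.sum_univ_two] <;> ring

section lift

variable {F : Type*} [Field F] [Fintype F]

local notation "SL2" => Matrix.SpecialLinearGroup (Fin 2) F

/-- Every element of order dividing 3 (≠1) in PSL₂ lifts to an SL₂ element whose matrix cubes
to 1 and is not scalar-central trivial. -/
lemma lift_cube (x : Matrix.ProjectiveSpecialLinearGroup (Fin 2) F)
    (hx3 : x ^ 3 = 1) :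
    ∃ B : SL2, QuotientGroup.mk B = x ∧ (B : Matrix (Fin 2) (Fin 2) F) ^ 3 = 1 := by
  obtain ⟨A, hA⟩ := QuotientGroup.mk_surjective x
  have hc : A ^ 3 ∈ Subgroup.center SL2 := by
    rw [← QuotientGroup.eq_one_iff]
    rw [← hA] at hx3
    exact hx3
  obtain ⟨r, hr, hrA⟩ := Matrix.SpecialLinearGroup.mem_center_iff.mp hc
  simp only [Fintype.card_fin] at hr
  have hr' : r = 1 ∨ r = -1 := mul_self_eq_one_iff.mp (by linear_combination hr)
  rcases hr' with h1 | h1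
  · refine ⟨A, hA, ?_⟩
    have : ((A ^ 3 : SL2) : Matrix (Fin 2) (Fin 2) F) = 1 := by
      rw [← hrA, h1]
      simp
    rwa [Matrix.SpecialLinearGroup.coe_pow] at this
  · -- use -A
    have hdetneg : ((-(A : Matrix (Fin 2) (Fin 2) F)).det) = 1 := by
      rw [Matrix.det_neg]
      simp [A.property]
    have hdetz : ((-1 : Matrix (Fin 2) (Fin 2) F)).det = 1 := by
      rw [Matrix.det_neg]
      simp
    set z : SL2 := ⟨(-1 : Matrix (Fin 2) (Fin 2) F), hdetz⟩ with hzdef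
    set B : SL2 := ⟨-(A : Matrix (Fin 2) (Fin 2) F), hdetneg⟩ with hBdef
    have hscal : scalar (Fin 2) r = (-1 : Matrix (Fin 2) (Fin 2) F) := by
      rw [h1]
      ext i j
      by_cases h : i = j <;>
        simp [Matrix.scalar_apply, Matrix.diagonal_apply, Matrix.neg_apply, Matrix.one_apply, h]
    refine ⟨B, ?_, ?_⟩
    · have hz : B = z * A := by
        apply Subtype.ext
        exact (neg_one_mul _).symm
      rw [hz]
      have hcen : z ∈ Subgroup.center SL2 := by
        apply Subgroup.mem_center_iff.mpr
        intro g
        apply Subtype.ext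
        exact (mul_neg_one _).trans (neg_one_mul _).symm
      have : (QuotientGroup.mk (z * A) : PSL(2, F)) =
          QuotientGroup.mk z * QuotientGroup.mk A := rfl
      rw [this, (QuotientGroup.eq_one_iff z).mpr hcen, one_mul]
      exact hA
    · have hA3 : (A : Matrix (Fin 2) (Fin 2) F) ^ 3 = -1 := by
        have h' : ((A ^ 3 : SL2) : Matrix (Fin 2) (Fin 2) F) = scalar (Fin 2) r := by
          rw [hrA]
        rw [Matrix.SpecialLinearGroup.coe_pow] at h'
        rw [h', hscal]
      show (-(A : Matrix (Fin 2) (Fin 2) F)) ^ 3 = 1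
      rw [Odd.neg_pow ⟨1, by norm_num⟩, hA3, neg_neg]

end lift

lemma conj_to_C {F : Type*} [Field F] [Fintype F] (hchar : ringChar F ≠ 3)
    (x : Matrix.ProjectiveSpecialLinearGroup (Fin 2) F)
    (hx : orderOf x = 3) :
    IsConj x (QuotientGroup.mk
      (⟨!![0, -1; 1, -1], by simp [Matrix.det_fin_two_of]⟩ :
        Matrix.SpecialLinearGroup (Fin 2) F)) := by
  have hx3 : x ^ 3 = 1 := by rw [← hx]; exact pow_orderOf_eq_one x
  have hx1 : x ≠ 1 := by
    intro h
    rw [h, orderOf_one] at hx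
    norm_num at hx
  obtain ⟨B, hBmk, hBcube⟩ := lift_cube x hx3
  set M : Matrix (Fin 2) (Fin 2) F := (B : Matrix (Fin 2) (Fin 2) F) with hMdef
  have hdet : M 0 0 * M 1 1 - M 0 1 * M 1 0 = 1 := by
    rw [← Matrix.det_fin_two]
    exact B.property
  have heta : !![M 0 0, M 0 1; M 1 0, M 1 1] = M := (Matrix.eta_fin_two M).symm
  have hns : ¬(M 0 1 = 0 ∧ M 1 0 = 0 ∧ M 0 0 = M 1 1) := by
    rintro ⟨h01, h10, h00⟩
    apply hx1
    rw [← hBmk]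
    apply (QuotientGroup.eq_one_iff B).mpr
    apply Matrix.SpecialLinearGroup.mem_center_iff.mpr
    refine ⟨M 0 0, ?_, ?_⟩
    · simp only [Fintype.card_fin]
      have : M.det = 1 := B.property
      rw [Matrix.det_fin_two] at this
      linear_combination this + M 0 0 * h00 + M 0 1 * h10
    · rw [← hMdef, ← heta]
      ext i j
      fin_cases i <;> fin_cases j <;>
        simp [Matrix.scalar_apply, Matrix.diagonal_apply, h01, h10, h00]
  obtain ⟨g, hg, hsemi⟩ := keyConj hchar (M 0 0) (M 0 1) (M 1 0) (M 1 1) hdet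
    (by rw [heta]; exact hBcube) hns
  rw [heta] at hsemi
  set gsl : Matrix.SpecialLinearGroup (Fin 2) F := ⟨g, hg⟩ with hgsl
  set Csl : Matrix.SpecialLinearGroup (Fin 2) F :=
    ⟨!![0, -1; 1, -1], by simp [Matrix.det_fin_two_of]⟩ with hCsl
  have hrel : B * gsl = gsl * Csl := by
    apply Subtype.ext
    rw [Matrix.SpecialLinearGroup.coe_mul, Matrix.SpecialLinearGroup.coe_mul]
    exact hsemi
  have hq : x * (QuotientGroup.mk gsl : Matrix.ProjectiveSpecialLinearGroup (Fin 2) F) =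
      QuotientGroup.mk gsl * QuotientGroup.mk Csl := by
    rw [← hBmk]
    have h1 : (QuotientGroup.mk B : Matrix.ProjectiveSpecialLinearGroup (Fin 2) F) *
        QuotientGroup.mk gsl = QuotientGroup.mk (B * gsl) := rfl
    have h2 : (QuotientGroup.mk gsl : Matrix.ProjectiveSpecialLinearGroup (Fin 2) F) *
        QuotientGroup.mk Csl = QuotientGroup.mk (gsl * Csl) := rfl
    rw [h1, h2, hrel]
  rw [isConj_iff]
  refine ⟨(QuotientGroup.mk gsl)⁻¹, ?_⟩
  rw [inv_inv, mul_assoc, hq, ← mul_assoc, inv_mul_cancel, one_mul]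

theorem stmt16 {F : Type*} [Field F] [Fintype F] (hchar : ringChar F ≠ 3)
    (x y : Matrix.ProjectiveSpecialLinearGroup (Fin 2) F)
    (hx : orderOf x = 3) (hy : orderOf y = 3) :
    IsConj x y := by
  exact (conj_to_C hchar x hx).trans (conj_to_C hchar y hy).symm
end

section
/- Let n ≥ 5 be an odd integer, let F be a finite field of odd cardinality q, and let g₀ ∈ SL_n(F) be the diagonal matrix diag(1, −1, −1, …, −1) (with a single entry 1 and n−1 entries −1); note g₀ ∈ SL_n(F) since n − 1 is even. Let C be the conjugacy class in G = PSL_n(F) of the image h₀ of g₀. Then the graph Γ(C) has no edges, and the action of G on the set of right cosets of the order-2 subgroup ⟨h₀⟩ by right multiplication is binary. -/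
open scoped Pointwise MatrixGroups

section MatrixAux
variable {n : ℕ} {F : Type*} [Field F]

lemma myRankAddLe (A B : Matrix (Fin n) (Fin n) F) :
    (A + B).rank ≤ A.rank + B.rank := by
  have hle : LinearMap.range (A + B).mulVecLin ≤
      LinearMap.range A.mulVecLin ⊔ LinearMap.range B.mulVecLin := by
    rw [Matrix.mulVecLin_add]
    rintro _ ⟨x, rfl⟩
    exact Submodule.mem_sup.mpr ⟨A.mulVecLin x, LinearMap.mem_range_self _ _,
      B.mulVecLin x, LinearMap.mem_range_self _ _, rfl⟩
  calc (A + B).rank ≤ Module.finrank F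
        ↥(LinearMap.range A.mulVecLin ⊔ LinearMap.range B.mulVecLin) :=
        Submodule.finrank_mono hle
    _ ≤ A.rank + B.rank := Submodule.finrank_add_le_finrank_add_finrank _ _

lemma myRankNeg (A : Matrix (Fin n) (Fin n) F) : (-A).rank = A.rank := by
  have h : (-A) = ((-1 : F) • (1 : Matrix (Fin n) (Fin n) F)) * A := by
    rw [Matrix.smul_mul, one_mul, neg_one_smul]
  rw [h, Matrix.rank_mul_eq_right_of_isUnit_det]
  rw [Matrix.det_smul, Matrix.det_one, mul_one]
  exact (isUnit_iff_ne_zero).mpr (pow_ne_zero _ (neg_ne_zero.mpr one_ne_zero))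

lemma myRankConjAdd (P Q M : Matrix (Fin n) (Fin n) F)
    (h1 : P * Q = 1) (h2 : Q * P = 1) (c : F) :
    (P * M * Q + c • 1).rank = (M + c • 1).rank := by
  have hP : IsUnit P.det := IsUnit.of_mul_eq_one Q.det (by rw [← Matrix.det_mul, h1, Matrix.det_one])
  have hQ : IsUnit Q.det := IsUnit.of_mul_eq_one P.det (by rw [← Matrix.det_mul, h2, Matrix.det_one])
  have key : P * M * Q + c • 1 = P * (M + c • 1) * Q := by
    rw [Matrix.mul_add, Matrix.add_mul, Matrix.mul_smul, Matrix.smul_mul, Matrix.mul_one, h1]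
  rw [key, Matrix.rank_mul_eq_left_of_isUnit_det _ _ hQ,
    Matrix.rank_mul_eq_right_of_isUnit_det _ _ hP]

end MatrixAux

lemma myTwoNeZero {F : Type*} [Field F] [Fintype F] (hq : Odd (Fintype.card F)) :
    (2 : F) ≠ 0 := by
  intro h2
  have hchar : CharP F (ringChar F) := ringChar.charP F
  have hdvd : ringChar F ∣ 2 := (ringChar.spec F 2).mp (by exact_mod_cast h2)
  have hprime : (ringChar F).Prime := CharP.char_is_prime F (ringChar F)
  have h2char : ringChar F = 2 := (Nat.prime_dvd_prime_iff_eq hprime Nat.prime_two).mp hdvd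
  haveI : CharP F 2 := h2char ▸ hchar
  obtain ⟨k, -, hcard⟩ := FiniteField.card F 2
  rw [hcard] at hq
  have : Even ((2:ℕ) ^ (k:ℕ)) := (Nat.even_pow).mpr ⟨even_two, k.2.ne'⟩
  exact (Nat.not_even_iff_odd.mpr hq) this

lemma noEdge {n : ℕ} (hn : 5 ≤ n) (hnodd : Odd n)
    {F : Type*} [Field F] [Fintype F] (hq : Odd (Fintype.card F))
    (g₀ : Matrix.SpecialLinearGroup (Fin n) F)
    (hg₀ : (g₀ : Matrix (Fin n) (Fin n) F) =
      Matrix.diagonal (fun i : Fin n => if (i : ℕ) = 0 then 1 else -1))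
    (h₀ : Matrix.ProjectiveSpecialLinearGroup (Fin n) F)
    (hh₀ : h₀ = QuotientGroup.mk g₀)
    (C : Set (Matrix.ProjectiveSpecialLinearGroup (Fin n) F))
    (hC : C = {x | IsConj h₀ x}) :
    ¬ ∃ x y, gammaAdj C x y := by
  classical
  have h2F : (2 : F) ≠ 0 := myTwoNeZero hq
  have hnpos : 0 < n := by omega
  set i0 : Fin n := ⟨0, hnpos⟩ with hi0
  rintro ⟨x, y, hxC, hyC, hxy, hcomm, hedge⟩
  -- g₀ is an involution
  have hg2 : g₀ * g₀ = 1 := by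
    apply Subtype.ext
    rw [Matrix.SpecialLinearGroup.coe_mul, hg₀, Matrix.diagonal_mul_diagonal,
      Matrix.SpecialLinearGroup.coe_one]
    have hfun : (fun i : Fin n => (if (i : ℕ) = 0 then (1:F) else -1) *
        (if (i : ℕ) = 0 then (1:F) else -1)) = fun _ => (1:F) := by
      funext i
      by_cases h : (i : ℕ) = 0 <;> simp [h]
    rw [hfun, Matrix.diagonal_one]
  have conjsq : ∀ R : Matrix.SpecialLinearGroup (Fin n) F,
      (R * g₀ * R⁻¹) * (R * g₀ * R⁻¹) = 1 := by
    intro R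
    have e : (R * g₀ * R⁻¹) * (R * g₀ * R⁻¹) = R * (g₀ * g₀) * R⁻¹ := by group
    rw [e, hg2, mul_one, mul_inv_cancel]
  -- lifting elements of C
  have liftC : ∀ z ∈ C, ∃ Pz : Matrix.SpecialLinearGroup (Fin n) F,
      z = QuotientGroup.mk (Pz * g₀ * Pz⁻¹) := by
    intro z hz
    rw [hC] at hz
    obtain ⟨c, hc⟩ := isConj_iff.mp hz
    obtain ⟨P, rfl⟩ := QuotientGroup.mk_surjective c
    refine ⟨P, ?_⟩
    rw [← hc, hh₀, QuotientGroup.mk_mul, QuotientGroup.mk_mul, QuotientGroup.mk_inv]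
  obtain ⟨P, hxP⟩ := liftC x hxC
  obtain ⟨Q, hyQ⟩ := liftC y hyC
  set X : Matrix.SpecialLinearGroup (Fin n) F := P * g₀ * P⁻¹ with hXdef
  set Y : Matrix.SpecialLinearGroup (Fin n) F := Q * g₀ * Q⁻¹ with hYdef
  set A : Matrix (Fin n) (Fin n) F := ↑X with hAdef
  set B : Matrix (Fin n) (Fin n) F := ↑Y with hBdef
  have hAA : A * A = 1 := by
    rw [hAdef, ← Matrix.SpecialLinearGroup.coe_mul, hXdef, conjsq P,
      Matrix.SpecialLinearGroup.coe_one]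
  have hBB : B * B = 1 := by
    rw [hBdef, ← Matrix.SpecialLinearGroup.coe_mul, hYdef, conjsq Q,
      Matrix.SpecialLinearGroup.coe_one]
  -- scalar extraction
  have centerScalar : ∀ (U V : Matrix.SpecialLinearGroup (Fin n) F),
      (QuotientGroup.mk U : Matrix.ProjectiveSpecialLinearGroup (Fin n) F) = QuotientGroup.mk V →
      ∃ r : F, r ^ n = 1 ∧ (V : Matrix (Fin n) (Fin n) F) = r • (U : Matrix (Fin n) (Fin n) F) := by
    intro U V h
    have hmem : U⁻¹ * V ∈ Subgroup.center (Matrix.SpecialLinearGroup (Fin n) F) :=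
      QuotientGroup.eq.mp h
    obtain ⟨r, hr1, hr2⟩ := Matrix.SpecialLinearGroup.mem_center_iff.mp hmem
    refine ⟨r, by simpa using hr1, ?_⟩
    have hUV : V = U * (U⁻¹ * V) := by group
    calc (V : Matrix (Fin n) (Fin n) F) = ↑U * ↑(U⁻¹ * V) := by
          rw [← Matrix.SpecialLinearGroup.coe_mul, ← hUV]
      _ = ↑U * ((r : F) • (1 : Matrix (Fin n) (Fin n) F)) := by
          rw [← hr2, Matrix.scalar_apply, Matrix.smul_one_eq_diagonal]
      _ = r • (U : Matrix (Fin n) (Fin n) F) := by rw [Matrix.mul_smul, mul_one]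
  -- odd power trick
  have oddPow : ∀ s : F, s ^ n = 1 → s * s = 1 → s = 1 := by
    intro s hsn hs2
    obtain ⟨k, hk⟩ := hnodd
    rw [hk, pow_add, pow_mul, pow_one, pow_two, hs2, one_pow, one_mul] at hsn
    exact hsn
  -- commuting at matrix level
  have hYX : (QuotientGroup.mk (X * Y) : Matrix.ProjectiveSpecialLinearGroup (Fin n) F) =
      QuotientGroup.mk (Y * X) :=
    calc (QuotientGroup.mk (X * Y) : Matrix.ProjectiveSpecialLinearGroup (Fin n) F)
        = QuotientGroup.mk X * QuotientGroup.mk Y := QuotientGroup.mk_mul _ X Y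
      _ = x * y := by rw [hxP, hyQ]
      _ = y * x := hcomm.eq
      _ = QuotientGroup.mk Y * QuotientGroup.mk X := by rw [hxP, hyQ]
      _ = QuotientGroup.mk (Y * X) := (QuotientGroup.mk_mul _ Y X).symm
  obtain ⟨r, hrn, hrs⟩ := centerScalar (X * Y) (Y * X) hYX
  have hrs' : B * A = r • (A * B) := by
    rw [hAdef, hBdef, ← Matrix.SpecialLinearGroup.coe_mul, ← Matrix.SpecialLinearGroup.coe_mul]
    exact hrs
  have hABdet : Matrix.det (A * B) = 1 := by
    rw [Matrix.det_mul, hAdef, hBdef, X.2, Y.2, mul_one]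
  have hr2 : r * r = 1 := by
    have e1 : A * (B * A) * A = A * B := by
      have : A * (B * A) * A = (A * B) * (A * A) := by noncomm_ring
      rw [this, hAA, mul_one]
    have e2 : A * (B * A) * A = (r * r) • (A * B) := by
      rw [hrs', Matrix.mul_smul, Matrix.smul_mul]
      have : A * (A * B) * A = (A * A) * (B * A) := by noncomm_ring
      rw [this, hAA, one_mul, hrs', smul_smul]
    have e3 : A * B = (r * r) • (A * B) := e1.symm.trans e2
    by_contra hne
    have h0 : (1 - r * r) • (A * B) = 0 := by
      rw [sub_smul, one_smul, ← e3, sub_self]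
    rcases smul_eq_zero.mp h0 with h | h
    · exact hne (sub_eq_zero.mp h).symm
    · haveI : Nonempty (Fin n) := ⟨i0⟩
      rw [h, Matrix.det_zero] at hABdet
      exact one_ne_zero hABdet.symm
  have hr1 : r = 1 := oddPow r hrn hr2
  rw [hr1, one_smul] at hrs'
  -- x * y ∈ C
  have hYinv : Y⁻¹ = Y := inv_eq_of_mul_eq_one_right (conjsq Q)
  have hXinv : X⁻¹ = X := inv_eq_of_mul_eq_one_right (conjsq P)
  have hyinv : y⁻¹ = y := by rw [hyQ, ← QuotientGroup.mk_inv, hYinv]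
  have hxinv : x⁻¹ = x := by rw [hxP, ← QuotientGroup.mk_inv, hXinv]
  have hxyC : x * y ∈ C := by
    rcases hedge with h | h
    · rwa [hyinv] at h
    · rw [hxinv] at h
      rwa [← hcomm.eq] at h
  obtain ⟨R, hR⟩ := liftC (x * y) hxyC
  have hmkeq : (QuotientGroup.mk (R * g₀ * R⁻¹) :
      Matrix.ProjectiveSpecialLinearGroup (Fin n) F) = QuotientGroup.mk (X * Y) :=
    calc (QuotientGroup.mk (R * g₀ * R⁻¹) :
          Matrix.ProjectiveSpecialLinearGroup (Fin n) F) = x * y := hR.symm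
      _ = QuotientGroup.mk X * QuotientGroup.mk Y := by rw [hxP, hyQ]
      _ = QuotientGroup.mk (X * Y) := (QuotientGroup.mk_mul _ X Y).symm
  obtain ⟨μ, hμn, hμs⟩ := centerScalar _ _ hmkeq
  set Wm : Matrix (Fin n) (Fin n) F := ↑(R * g₀ * R⁻¹) with hWdef
  have hμs' : A * B = μ • Wm := by
    rw [hAdef, hBdef, ← Matrix.SpecialLinearGroup.coe_mul]
    exact hμs
  have hWW : Wm * Wm = 1 := by
    rw [hWdef, ← Matrix.SpecialLinearGroup.coe_mul, conjsq R,
      Matrix.SpecialLinearGroup.coe_one]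
  have hABAB : (A * B) * (A * B) = 1 := by
    have e : (A * B) * (A * B) = A * ((B * A) * B) := by noncomm_ring
    rw [e, hrs']
    have e2 : A * ((A * B) * B) = (A * A) * (B * B) := by noncomm_ring
    rw [e2, hAA, hBB, mul_one]
  have hμ2 : μ * μ = 1 := by
    have key : (μ * μ) • (1 : Matrix (Fin n) (Fin n) F) = 1 := by
      calc (μ * μ) • (1 : Matrix (Fin n) (Fin n) F) = (μ • Wm) * (μ • Wm) := by
            rw [Matrix.smul_mul, Matrix.mul_smul, smul_smul, hWW]
        _ = (A * B) * (A * B) := by rw [← hμs']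
        _ = 1 := hABAB
    have := congrFun (congrFun key i0) i0
    simpa using this
  have hμ1 : μ = 1 := oddPow μ hμn hμ2
  rw [hμ1, one_smul] at hμs'
  -- rank computations
  have hrkD : ((g₀ : Matrix (Fin n) (Fin n) F) + (1 : F) • 1).rank = 1 := by
    rw [hg₀, one_smul, ← Matrix.diagonal_one, Matrix.diagonal_add, Matrix.rank_diagonal]
    rw [Fintype.card_congr (Equiv.subtypeEquivRight (q := fun i : Fin n => i = i0) ?_)]
    · exact Fintype.card_subtype_eq i0
    · intro i
      by_cases h : (i : ℕ) = 0
      · have hii : i = i0 := Fin.ext (by simp [hi0, h])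
        simp only [Pi.add_apply, h, if_pos]
        constructor
        · intro _; exact hii
        · intro _
          rw [one_add_one_eq_two]
          exact h2F
      · have hii : i ≠ i0 := fun hcon => h (by rw [hcon])
        simp only [Pi.add_apply, h, if_neg, if_false]
        constructor
        · intro hcon; exact absurd (by ring) hcon
        · intro hcon; exact absurd hcon hii
  have rankConj : ∀ (R' : Matrix.SpecialLinearGroup (Fin n) F),
      (((R' * g₀ * R'⁻¹ : Matrix.SpecialLinearGroup (Fin n) F) : Matrix (Fin n) (Fin n) F)
        + (1 : F) • 1).rank = 1 := by
    intro R'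
    have h1 : (R' : Matrix (Fin n) (Fin n) F) * ((R'⁻¹ : Matrix.SpecialLinearGroup (Fin n) F) :
        Matrix (Fin n) (Fin n) F) = 1 := by
      rw [← Matrix.SpecialLinearGroup.coe_mul, mul_inv_cancel,
        Matrix.SpecialLinearGroup.coe_one]
    have h2 : ((R'⁻¹ : Matrix.SpecialLinearGroup (Fin n) F) : Matrix (Fin n) (Fin n) F) *
        (R' : Matrix (Fin n) (Fin n) F) = 1 := by
      rw [← Matrix.SpecialLinearGroup.coe_mul, inv_mul_cancel,
        Matrix.SpecialLinearGroup.coe_one]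
    have hco : ((R' * g₀ * R'⁻¹ : Matrix.SpecialLinearGroup (Fin n) F) :
        Matrix (Fin n) (Fin n) F) = (R' : Matrix (Fin n) (Fin n) F) *
        (g₀ : Matrix (Fin n) (Fin n) F) * ((R'⁻¹ : Matrix.SpecialLinearGroup (Fin n) F) :
        Matrix (Fin n) (Fin n) F) := by
      rw [Matrix.SpecialLinearGroup.coe_mul, Matrix.SpecialLinearGroup.coe_mul]
    rw [hco, myRankConjAdd _ _ _ h1 h2 (1 : F)]
    exact hrkD
  have hrA : (A + (1 : F) • 1).rank = 1 := rankConj P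
  have hrB : (B + (1 : F) • 1).rank = 1 := rankConj Q
  have hrW : (Wm + (1 : F) • 1).rank = 1 := rankConj R
  have hrAB : (A + B).rank = 1 := by
    have e : (A * B) + (1 : F) • 1 = A * (B + A) := by
      rw [Matrix.mul_add, hAA, one_smul]
    have : ((A * B) + (1 : F) • 1).rank = (B + A).rank := by
      rw [e, Matrix.rank_mul_eq_right_of_isUnit_det A (B + A) (by rw [hAdef, X.2]; exact isUnit_one)]
    rw [add_comm A B, ← this, hμs', hrW]
  have hu2 : IsUnit ((2 : F) • (1 : Matrix (Fin n) (Fin n) F)) := by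
    rw [Matrix.isUnit_iff_isUnit_det, Matrix.det_smul, Matrix.det_one, mul_one]
    exact isUnit_iff_ne_zero.mpr (pow_ne_zero _ h2F)
  have htwo : ((2 : F) • (1 : Matrix (Fin n) (Fin n) F)).rank = n := by
    rw [Matrix.rank_of_isUnit _ hu2, Fintype.card_fin]
  have hdecomp : ((2 : F) • (1 : Matrix (Fin n) (Fin n) F)) =
      (A + (1 : F) • 1) + ((B + (1 : F) • 1) + (-(A + B))) := by
    module
  have hle3 : n ≤ 3 := by
    calc n = ((2 : F) • (1 : Matrix (Fin n) (Fin n) F)).rank := htwo.symm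
      _ = ((A + (1 : F) • 1) + ((B + (1 : F) • 1) + (-(A + B)))).rank := by rw [← hdecomp]
      _ ≤ (A + (1 : F) • 1).rank + ((B + (1 : F) • 1) + (-(A + B))).rank := myRankAddLe _ _
      _ ≤ (A + (1 : F) • 1).rank + ((B + (1 : F) • 1).rank + (-(A + B)).rank) :=
          Nat.add_le_add_left (myRankAddLe _ _) _
      _ = 1 + (1 + 1) := by rw [hrA, hrB, myRankNeg, hrAB]
      _ = 3 := rfl
  omega

section Helly

lemma myHelly {α : Type*} [Nonempty α] {m : ℕ} (S : Fin m → Set α)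
    (h2 : ∀ t, ∃ p q, S t = {p, q})
    (hp : ∀ i j, (S i ∩ S j).Nonempty) :
    (∃ a, ∀ t, a ∈ S t) ∨
      ∃ (i j k : Fin m) (u v w : α), u ≠ v ∧ u ≠ w ∧ v ≠ w ∧
        u ∈ S i ∧ v ∈ S i ∧ u ∈ S j ∧ w ∈ S j ∧ v ∈ S k ∧ w ∈ S k := by
  by_cases hE : ∃ a, ∀ t, a ∈ S t
  · exact Or.inl hE
  push_neg at hE
  rcases Nat.eq_zero_or_pos m with hm | hm
  · subst hm
    obtain ⟨t, _⟩ := hE (Classical.arbitrary α)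
    exact absurd t.2 (by omega)
  right
  set i : Fin m := ⟨0, hm⟩
  obtain ⟨p, q, hpq⟩ := h2 i
  have hpSi : p ∈ S i := by rw [hpq]; exact Set.mem_insert _ _
  have hqSi : q ∈ S i := by rw [hpq]; exact Set.mem_insert_iff.mpr (Or.inr rfl)
  obtain ⟨j, hj⟩ := hE p
  obtain ⟨k, hk⟩ := hE q
  have hqSj : q ∈ S j := by
    obtain ⟨r, hri, hrj⟩ := hp i j
    rw [hpq] at hri
    rcases hri with rfl | rfl
    · exact absurd hrj hj
    · exact hrj
  have hpSk : p ∈ S k := by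
    obtain ⟨r, hri, hrk⟩ := hp i k
    rw [hpq] at hri
    rcases hri with rfl | rfl
    · exact hrk
    · exact absurd hrk hk
  obtain ⟨r, hrj, hrk⟩ := hp j k
  have hqp : q ≠ p := fun h => hj (h ▸ hqSj)
  have hqr : q ≠ r := fun h => hk (h ▸ hrk)
  have hpr : p ≠ r := fun h => hj (h ▸ hrj)
  exact ⟨i, j, k, q, p, r, hqp, hqr, hpr, hqSi, hpSi, hqSj, hrj, hpSk, hrk⟩

end Helly

theorem myBinaryOfNoEdge {G : Type*} [Group G] (h₀ : G) (hh2 : h₀ * h₀ = 1)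
    (C : Set G) (hC : C = {x | IsConj h₀ x})
    (part1 : ¬ ∃ x y, gammaAdj C x y) :
    IsBinaryCosetAction (Subgroup.zpowers h₀) := by
  classical
  set H := Subgroup.zpowers h₀ with hHdef
  intro m I J hpair
  have hh0inv : h₀⁻¹ = h₀ := inv_eq_of_mul_eq_one_right hh2
  have hHmem : ∀ a : G, a ∈ Subgroup.zpowers h₀ ↔ a = 1 ∨ a = h₀ := by
    intro a
    constructor
    · rintro ⟨k, rfl⟩
      show h₀ ^ k = 1 ∨ h₀ ^ k = h₀
      have h2z : h₀ ^ (2 : ℤ) = 1 := by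
        rw [show (2 : ℤ) = ((2 : ℕ) : ℤ) from rfl, zpow_natCast, pow_two, hh2]
      rcases Int.even_or_odd k with ⟨l, hl⟩ | ⟨l, hl⟩
      · left
        rw [hl, ← two_mul, zpow_mul, h2z, one_zpow]
      · right
        rw [hl, zpow_add, zpow_mul, h2z, one_zpow, zpow_one, one_mul]
    · rintro (rfl | h)
      · exact one_mem _
      · exact h ▸ Subgroup.mem_zpowers h₀
  have hiff : ∀ (g a b : G),
      rightCosetMul H g (Quotient.mk (QuotientGroup.rightRel H) a) =
        Quotient.mk (QuotientGroup.rightRel H) b ↔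
      (g = a⁻¹ * b ∨ g = a⁻¹ * h₀ * b) := by
    intro g a b
    have hmk : rightCosetMul H g (Quotient.mk (QuotientGroup.rightRel H) a) =
        Quotient.mk (QuotientGroup.rightRel H) (a * g) := rfl
    rw [hmk]
    constructor
    · intro h
      have hmem : b * (a * g)⁻¹ ∈ H := QuotientGroup.rightRel_apply.mp (Quotient.exact h)
      rcases (hHmem _).mp hmem with h' | h'
      · left
        have hb : b = a * g := mul_inv_eq_one.mp h'
        rw [hb]
        group
      · right
        have hb : b = h₀ * (a * g) := by
          rw [← h']
          group
        rw [hb]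
        have e3 : a⁻¹ * h₀ * (h₀ * (a * g)) = a⁻¹ * (h₀ * h₀) * (a * g) := by group
        rw [e3, hh2]
        group
    · rintro (rfl | rfl)
      · have e : a * (a⁻¹ * b) = b := by group
        rw [e]
      · have e : a * (a⁻¹ * h₀ * b) = h₀ * b := by group
        rw [e]
        refine Quotient.sound (QuotientGroup.rightRel_apply.mpr ?_)
        have e2 : b * (h₀ * b)⁻¹ = h₀⁻¹ := by group
        rw [e2, hh0inv]
        exact Subgroup.mem_zpowers h₀
  set S : Fin m → Set G := fun k =>
    {((I k).out)⁻¹ * (J k).out, ((I k).out)⁻¹ * h₀ * (J k).out} with hSdef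
  have hSmem : ∀ (g : G) (k : Fin m),
      rightCosetMul H g (I k) = J k ↔ g ∈ S k := by
    intro g k
    rw [← Quotient.out_eq (I k), ← Quotient.out_eq (J k), hiff]
    simp [hSdef]
  have hpair' : ∀ i j, (S i ∩ S j).Nonempty := by
    intro i j
    obtain ⟨g, h1, h2⟩ := hpair i j
    exact ⟨g, (hSmem g i).mp h1, (hSmem g j).mp h2⟩
  have h2S : ∀ t, ∃ p q, S t = {p, q} := fun t => ⟨_, _, rfl⟩
  rcases myHelly S h2S hpair' with ⟨a, ha⟩ |
    ⟨i, j, k, u, v, w, huv, huw, hvw, hui, hvi, huj, hwj, hvk, hwk⟩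
  · exact ⟨a, fun k => (hSmem a k).mpr (ha k)⟩
  · exfalso
    have hCmem : ∀ (t : Fin m) (c d : G), c ∈ S t → d ∈ S t → c ≠ d → c⁻¹ * d ∈ C := by
      intro t c d hc hd hcd
      rw [hC]
      rcases hc with rfl | rfl <;> rcases hd with rfl | rfl
      · exact absurd rfl hcd
      · exact isConj_iff.mpr ⟨((J t).out)⁻¹, by group⟩
      · refine isConj_iff.mpr ⟨((J t).out)⁻¹, ?_⟩
        have e : (((I t).out)⁻¹ * h₀ * (J t).out)⁻¹ * (((I t).out)⁻¹ * (J t).out)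
            = ((J t).out)⁻¹ * h₀⁻¹ * (J t).out := by group
        rw [e, hh0inv]
        group
      · exact absurd rfl hcd
    have haC : u⁻¹ * v ∈ C := hCmem i u v hui hvi huv
    have hbC : u⁻¹ * w ∈ C := hCmem j u w huj hwj huw
    have heC : v⁻¹ * w ∈ C := hCmem k v w hvk hwk hvw
    have hsq : ∀ c ∈ C, c * c = 1 := by
      intro c hc
      rw [hC] at hc
      obtain ⟨d, hd⟩ := isConj_iff.mp hc
      rw [← hd]
      have e : (d * h₀ * d⁻¹) * (d * h₀ * d⁻¹) = d * (h₀ * h₀) * d⁻¹ := by group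
      rw [e, hh2, mul_one, mul_inv_cancel]
    have hainv : (u⁻¹ * v)⁻¹ = u⁻¹ * v := inv_eq_of_mul_eq_one_right (hsq _ haC)
    have hbinv : (u⁻¹ * w)⁻¹ = u⁻¹ * w := inv_eq_of_mul_eq_one_right (hsq _ hbC)
    have hab : u⁻¹ * v ≠ u⁻¹ * w := fun h => hvw (mul_left_cancel h)
    have he : (u⁻¹ * v)⁻¹ * (u⁻¹ * w) = v⁻¹ * w := by group
    have heC' : (u⁻¹ * v)⁻¹ * (u⁻¹ * w) ∈ C := he ▸ heC
    have hesq : ((u⁻¹ * v)⁻¹ * (u⁻¹ * w)) * ((u⁻¹ * v)⁻¹ * (u⁻¹ * w)) = 1 := hsq _ heC'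
    rw [hainv] at hesq heC'
    have hinvab : ((u⁻¹ * v) * (u⁻¹ * w))⁻¹ = (u⁻¹ * v) * (u⁻¹ * w) :=
      inv_eq_of_mul_eq_one_right hesq
    have hcommab : Commute (u⁻¹ * v) (u⁻¹ * w) := by
      show (u⁻¹ * v) * (u⁻¹ * w) = (u⁻¹ * w) * (u⁻¹ * v)
      calc (u⁻¹ * v) * (u⁻¹ * w) = ((u⁻¹ * v) * (u⁻¹ * w))⁻¹ := hinvab.symm
        _ = (u⁻¹ * w)⁻¹ * (u⁻¹ * v)⁻¹ := mul_inv_rev _ _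
        _ = (u⁻¹ * w) * (u⁻¹ * v) := by rw [hainv, hbinv]
    have hedge' : (u⁻¹ * v) * (u⁻¹ * w)⁻¹ ∈ C := by
      rw [hbinv]
      exact heC'
    exact part1 ⟨u⁻¹ * v, u⁻¹ * w, haC, hbC, hab, hcommab, Or.inl hedge'⟩

lemma myG0Sq {n : ℕ} {F : Type*} [Field F]
    (g₀ : Matrix.SpecialLinearGroup (Fin n) F)
    (hg₀ : (g₀ : Matrix (Fin n) (Fin n) F) =
      Matrix.diagonal (fun i : Fin n => if (i : ℕ) = 0 then 1 else -1)) :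
    g₀ * g₀ = 1 := by
  apply Subtype.ext
  rw [Matrix.SpecialLinearGroup.coe_mul, hg₀, Matrix.diagonal_mul_diagonal,
    Matrix.SpecialLinearGroup.coe_one]
  have hfun : (fun i : Fin n => (if (i : ℕ) = 0 then (1:F) else -1) *
      (if (i : ℕ) = 0 then (1:F) else -1)) = fun _ => (1:F) := by
    funext i
    by_cases h : (i : ℕ) = 0 <;> simp [h]
  rw [hfun, Matrix.diagonal_one]


theorem stmt18 {n : ℕ} (hn : 5 ≤ n) (hnodd : Odd n)
    {F : Type*} [Field F] [Fintype F] (hq : Odd (Fintype.card F))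
    (g₀ : Matrix.SpecialLinearGroup (Fin n) F)
    (hg₀ : (g₀ : Matrix (Fin n) (Fin n) F) =
      Matrix.diagonal (fun i : Fin n => if (i : ℕ) = 0 then 1 else -1))
    (h₀ : Matrix.ProjectiveSpecialLinearGroup (Fin n) F)
    (hh₀ : h₀ = QuotientGroup.mk g₀)
    (C : Set (Matrix.ProjectiveSpecialLinearGroup (Fin n) F))
    (hC : C = {x | IsConj h₀ x}) :
    (¬ ∃ x y, gammaAdj C x y) ∧ IsBinaryCosetAction (Subgroup.zpowers h₀) := by
  have part1 := noEdge hn hnodd hq g₀ hg₀ h₀ hh₀ C hC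
  have hh2 : h₀ * h₀ = 1 := by
    rw [hh₀, ← QuotientGroup.mk_mul, myG0Sq g₀ hg₀]
    rfl
  exact ⟨part1, myBinaryOfNoEdge h₀ hh2 C hC part1⟩
end
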